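/- arXiv:2201.06277 — 4 statements merged into one kernel-verified Lean document; each statement's English description precedes it below -/
import Mathlib

section
/- Assume the SCAR assumption e(x) = e_m for all x ∈ ℝ^d with 0 < e_m ≤ 1, V ≥ 2, n·e_m ≥ V, and set h' = √(V/(n·e_m)). If 0 < h ≤ h', then there exists an absolute constant κ₂ > 0 such that the minimax risk satisfies R(S,h) ≥ κ₂·√((V−1)/(n·e_m)). -/
open MeasureTheory ProbabilityTheory Real Filter Topology

noncomputable section

/-- A classifier: a measurable `{0,1}`-valued function on the feature space. -/
def IsClassifier {α : Type*} [MeasurableSpace α] (g : α → ℝ) : Prop :=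
  Measurable g ∧ ∀ x, g x = 0 ∨ g x = 1

/-- `η` is a version of the regression function `x ↦ P(Y = 1 ∣ X = x)`. -/
def IsRegression {Ω α : Type*} [MeasurableSpace Ω] [MeasurableSpace α]
    (P : Measure Ω) (X : Ω → α) (Y : Ω → ℝ) (η : α → ℝ) : Prop :=
  Measurable η ∧ (∀ x, 0 ≤ η x ∧ η x ≤ 1) ∧
    ∀ A : Set α, MeasurableSet A →
      ∫ ω in X ⁻¹' A, Y ω ∂P = ∫ ω in X ⁻¹' A, η (X ω) ∂P

/-- `e` is the propensity: `P(S = 1 ∣ Y = 1, X = x) = e x` and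
`P(S = 1 ∣ Y = 0, X = x) = 0` (the latter is equivalent to `S ≤ Y` a.s.). -/
def IsPropensity {Ω α : Type*} [MeasurableSpace Ω] [MeasurableSpace α]
    (P : Measure Ω) (X : Ω → α) (Y S : Ω → ℝ) (e : α → ℝ) : Prop :=
  Measurable e ∧ (∀ x, 0 ≤ e x ∧ e x ≤ 1) ∧
    (∀ᵐ ω ∂P, S ω ≤ Y ω) ∧
    ∀ A : Set α, MeasurableSet A →
      ∫ ω in X ⁻¹' A, S ω ∂P = ∫ ω in X ⁻¹' A, e (X ω) * Y ω ∂P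

/-- Misclassification risk `R(g) = P(g(X) ≠ Y)`. -/
def risk {Ω α : Type*} [MeasurableSpace Ω]
    (P : Measure Ω) (X : Ω → α) (Y : Ω → ℝ) (g : α → ℝ) : ℝ :=
  (P {ω | g (X ω) ≠ Y ω}).toReal

/-- The Bayes classifier `g*(x) = 1{η(x) ≥ 1/2}`. -/
def bayes {α : Type*} (η : α → ℝ) : α → ℝ := fun x => if (1 : ℝ) / 2 ≤ η x then 1 else 0

/-- Excess risk `ℓ(g, g*) = R(g) − R(g*)`. -/
def excessRisk {Ω α : Type*} [MeasurableSpace Ω]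
    (P : Measure Ω) (X : Ω → α) (Y : Ω → ℝ) (η : α → ℝ) (g : α → ℝ) : ℝ :=
  risk P X Y g - risk P X Y (bayes η)

/-- The SAR loss `r_SAR(g,(x,s)) = (1{s=1}/e(x))·(2·1{g(x)≠1} − 1) + 1{g(x)≠0}`. -/
def rSAR {α : Type*} (e : α → ℝ) (g : α → ℝ) (p : α × ℝ) : ℝ :=
  (if p.2 = 1 then (1 : ℝ) else 0) / e p.1 * (2 * (if g p.1 ≠ 1 then (1 : ℝ) else 0) - 1)
    + (if g p.1 ≠ 0 then (1 : ℝ) else 0)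

/-- Empirical risk `(1/n)·Σ_{i=1}^n r(g,(X_i,S_i))` of a generic loss `r` on an `n`-sample. -/
def empRisk {Ω α : Type*} (r : (α → ℝ) → α × ℝ → ℝ) (X : Ω → α) (S : Ω → ℝ) (n : ℕ)
    (g : α → ℝ) (ω : Fin n → Ω) : ℝ :=
  (1 / (n : ℝ)) * ∑ i : Fin n, r g (X (ω i), S (ω i))

/-- A finite set of points is shattered by the class `𝒮`: every labeling is realized. -/
def Shatters {α : Type*} (𝒮 : Set (α → ℝ)) {k : ℕ} (x : Fin k → α) : Prop :=
  ∀ b : Fin k → Bool, ∃ g ∈ 𝒮, ∀ i, g (x i) = if b i then 1 else 0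

/-- The class `𝒮` has VC dimension exactly `V`. -/
def HasVCDim {α : Type*} (𝒮 : Set (α → ℝ)) (V : ℕ) : Prop :=
  (∃ x : Fin V → α, Shatters 𝒮 x) ∧ ∀ x : Fin (V + 1) → α, ¬ Shatters 𝒮 x

/-- Separability assumption (A₁): a countable subclass `𝒮' ⊆ 𝒮` that is dense in
the sense of pointwise convergence of the loss `r`. -/
def SeparableClass {α : Type*} (r : (α → ℝ) → α × ℝ → ℝ) (𝒮 𝒮' : Set (α → ℝ)) : Prop :=
  𝒮' ⊆ 𝒮 ∧ 𝒮'.Countable ∧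
    ∀ g ∈ 𝒮, ∃ u : ℕ → α → ℝ, (∀ k, u k ∈ 𝒮') ∧
      ∀ p : α × ℝ, Tendsto (fun k => r (u k) p) atTop (𝓝 (r g p))

/-- The set of admissible distributions for the minimax risk: `μ` is the joint law of
`(X, Y, S)`, with regression function `η` satisfying the Massart noise condition with
margin `h`, Bayes classifier in `𝒮`, and propensity `e`. -/
def PUAdmissible {α : Type*} [MeasurableSpace α] (e : α → ℝ) (𝒮 : Set (α → ℝ)) (h : ℝ)
    (μ : Measure (α × ℝ × ℝ)) (η : α → ℝ) : Prop :=
  IsProbabilityMeasure μ ∧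
    (∀ᵐ p ∂μ, (p.2.1 = 0 ∨ p.2.1 = 1) ∧ (p.2.2 = 0 ∨ p.2.2 = 1)) ∧
    IsRegression μ (fun p => p.1) (fun p => p.2.1) η ∧
    IsPropensity μ (fun p => p.1) (fun p => p.2.1) (fun p => p.2.2) e ∧
    bayes η ∈ 𝒮 ∧ (∀ x, h ≤ |2 * η x - 1|)

/-- Minimax risk: infimum over estimators (functions of the observed `(X_i, S_i)` sample,
valued in `𝒮`) of the supremum over admissible distributions of the expected excess risk. -/
def minimaxRisk {α : Type*} [MeasurableSpace α] (e : α → ℝ) (𝒮 : Set (α → ℝ)) (h : ℝ)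
    (n : ℕ) : ℝ :=
  ⨅ ghat : {f : (Fin n → α × ℝ) → α → ℝ // ∀ z, f z ∈ 𝒮},
    ⨆ q : {q : Measure (α × ℝ × ℝ) × (α → ℝ) // PUAdmissible e 𝒮 h q.1 q.2},
      ∫ z, excessRisk q.1.1 (fun p => p.1) (fun p => p.2.1) q.1.2 (ghat.1 z)
        ∂(Measure.pi fun _ : Fin n => q.1.1.map (fun p => (p.1, p.2.2)))

set_option maxHeartbeats 1000000
set_option linter.unusedSectionVars false
set_option linter.unusedVariables false
set_option linter.unreachableTactic false
set_option linter.unusedTactic false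
set_option linter.unnecessarySeqFocus false





lemma apply_sum_smul_dirac {β : Type*} [MeasurableSpace β] {K : Type*} [Fintype K]
    (c : K → ENNReal) (a : K → β) (B : Set β) (hB : MeasurableSet B) :
    (∑ k, c k • Measure.dirac (a k)) B = ∑ k, c k * B.indicator 1 (a k) := by
  rw [Measure.finset_sum_apply]
  congr 1; ext k
  rw [Measure.smul_apply, Measure.dirac_apply' _ hB, smul_eq_mul]

lemma isFiniteMeasure_sum_smul_dirac {β : Type*} [MeasurableSpace β] {K : Type*} [Fintype K]
    (c : K → ENNReal) (hc : ∀ k, c k ≠ ⊤) (a : K → β) :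
    IsFiniteMeasure (∑ k, c k • Measure.dirac (a k)) := by
  constructor
  rw [apply_sum_smul_dirac c a _ MeasurableSet.univ]
  simp only [Set.indicator_univ, Pi.one_apply, mul_one]
  exact ENNReal.sum_lt_top.2 fun k _ => (hc k).lt_top

lemma integrable_smul_dirac {β : Type*} [MeasurableSpace β] [MeasurableSingletonClass β]
    (c : ENNReal) (hc : c ≠ ⊤) (a : β) (f : β → ℝ) :
    Integrable f (c • Measure.dirac a) := by
  refine Integrable.smul_measure ?_ hc
  have h1 : f =ᵐ[Measure.dirac a] (fun _ => f a) := by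
    rw [Filter.EventuallyEq, ae_iff]
    have : {x | ¬ f x = f a} ⊆ {a}ᶜ := by
      intro x hx hxa
      exact hx (by simp at hxa; rw [hxa])
    refine measure_mono_null this ?_
    rw [Measure.dirac_apply' _ (MeasurableSet.singleton a).compl]
    simp
  exact (integrable_const (f a)).congr h1.symm

lemma integral_sum_smul_dirac {β : Type*} [MeasurableSpace β] [MeasurableSingletonClass β]
    {K : Type*} [Fintype K] (c : K → ENNReal) (hc : ∀ k, c k ≠ ⊤) (a : K → β) (f : β → ℝ) :
    ∫ z, f z ∂(∑ k, c k • Measure.dirac (a k)) = ∑ k, (c k).toReal * f (a k) := by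
  rw [integral_finset_sum_measure (fun k _ => integrable_smul_dirac (c k) (hc k) (a k) f)]
  congr 1; ext k
  rw [integral_smul_measure, integral_dirac, smul_eq_mul]

lemma setIntegral_sum_smul_dirac {β : Type*} [MeasurableSpace β] [MeasurableSingletonClass β]
    {K : Type*} [Fintype K] (c : K → ENNReal) (hc : ∀ k, c k ≠ ⊤) (a : K → β) (f : β → ℝ)
    (T : Set β) (hT : MeasurableSet T) [∀ z, Decidable (z ∈ T)] :
    ∫ z in T, f z ∂(∑ k, c k • Measure.dirac (a k)) =
      ∑ k, (c k).toReal * (if a k ∈ T then f (a k) else 0) := by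
  rw [← integral_indicator hT, integral_sum_smul_dirac c hc a]
  congr 1; ext k
  rw [Set.indicator_apply]

lemma pi_sum_smul_dirac {β : Type*} [MeasurableSpace β] {K : Type*} [Fintype K] [DecidableEq K]
    (n : ℕ) (c : K → ENNReal) (hc : ∀ k, c k ≠ ⊤) (a : K → β) :
    Measure.pi (fun _ : Fin n => ∑ k, c k • Measure.dirac (a k)) =
      ∑ φ : Fin n → K, (∏ i, c (φ i)) • Measure.dirac (fun i => a (φ i)) := by
  haveI := isFiniteMeasure_sum_smul_dirac c hc a
  refine Measure.pi_eq ?_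
  intro B hB
  rw [Measure.finset_sum_apply]
  have hmem : MeasurableSet (Set.pi Set.univ B) := MeasurableSet.univ_pi hB
  have : ∀ φ : Fin n → K,
      ((∏ i, c (φ i)) • Measure.dirac (fun i => a (φ i))) (Set.pi Set.univ B)
        = ∏ i, (c (φ i) * (B i).indicator 1 (a (φ i))) := by
    intro φ
    rw [Measure.smul_apply, Measure.dirac_apply' _ hmem, smul_eq_mul, Finset.prod_mul_distrib]
    congr 1
    by_cases hφ : (fun i => a (φ i)) ∈ Set.pi Set.univ B
    · rw [Set.indicator_of_mem hφ]
      rw [Set.mem_univ_pi] at hφ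
      simp only [Pi.one_apply]
      rw [Finset.prod_eq_one]
      intro i _
      rw [Set.indicator_of_mem (hφ i)]
      simp
    · rw [Set.indicator_of_notMem hφ]
      rw [Set.mem_univ_pi] at hφ
      push_neg at hφ
      obtain ⟨i, hi⟩ := hφ
      exact (Finset.prod_eq_zero (Finset.mem_univ i) (by rw [Set.indicator_of_notMem hi])).symm
  simp_rw [this]
  rw [← Fintype.prod_sum (fun (i : Fin n) (k : K) => c k * (B i).indicator 1 (a k))]
  congr 1; ext i
  rw [apply_sum_smul_dirac c a _ (hB i)]





example (d : ℕ) : MeasurableSingletonClass ((Fin d → ℝ) × ℝ) := inferInstance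
example (d n : ℕ) : MeasurableSingletonClass (Fin n → (Fin d → ℝ) × ℝ) := inferInstance
example (d : ℕ) : MeasurableSingletonClass ((Fin d → ℝ) × ℝ × ℝ) := inferInstance

-- 1 - t ≥ exp (-2 t) on [0, 3/4]
lemma exp_neg_two_le (t : ℝ) (h0 : 0 ≤ t) (h1 : t ≤ 3/4) : Real.exp (-(2*t)) ≤ 1 - t := by
  have hs : (0:ℝ) ≤ 4/3 * t := by linarith
  have hs1 : 4/3 * t ≤ 1 := by linarith
  have hconv := convexOn_exp.2 (Set.mem_univ (0:ℝ)) (Set.mem_univ (-(3/2):ℝ))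
    (by linarith : (0:ℝ) ≤ 1 - 4/3*t) hs (by ring)
  have he : Real.exp (-(3/2)) ≤ 1/4 := by
    have h2 : Real.exp (3/2) = Real.exp 1 * Real.exp (1/2) := by
      rw [← Real.exp_add]; norm_num
    have h4 : (4:ℝ) ≤ Real.exp (3/2) := by
      nlinarith [Real.exp_one_gt_d9.le, Real.add_one_le_exp (1/2:ℝ)]
    rw [Real.exp_neg]
    have h5 := inv_anti₀ (by norm_num : (0:ℝ) < 4) h4
    calc (Real.exp (3/2))⁻¹ ≤ 4⁻¹ := h5
      _ = 1/4 := by norm_num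
  calc Real.exp (-(2*t)) = Real.exp ((1 - 4/3*t) • (0:ℝ) + (4/3*t) • (-(3/2):ℝ)) := by
        congr 1; simp [smul_eq_mul]; ring
    _ ≤ (1 - 4/3*t) * Real.exp 0 + (4/3*t) * Real.exp (-(3/2)) := hconv
    _ ≤ (1 - 4/3*t) * 1 + (4/3*t) * (1/4) := by
        gcongr
        · exact Real.exp_zero.le
    _ = 1 - t := by ring





lemma sqrt_finset_prod {ι : Type*} (s : Finset ι) (f : ι → ℝ) (hf : ∀ i ∈ s, 0 ≤ f i) :
    Real.sqrt (∏ i ∈ s, f i) = ∏ i ∈ s, Real.sqrt (f i) := by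
  induction s using Finset.cons_induction with
  | empty => simp
  | cons a s ha ih =>
      rw [Finset.prod_cons, Finset.prod_cons,
        Real.sqrt_mul (hf a (Finset.mem_cons_self a s)),
        ih (fun i hi => hf i (Finset.mem_cons_of_mem hi))]

lemma lecam_sum_min {ι : Type*} [Fintype ι] (p q : ι → ℝ) (hp : ∀ i, 0 ≤ p i)
    (hq : ∀ i, 0 ≤ q i) (hp1 : ∑ i, p i ≤ 1) (hq1 : ∑ i, q i ≤ 1) :
    (∑ i, Real.sqrt (p i * q i))^2 / 2 ≤ ∑ i, min (p i) (q i) := by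
  have key : ∀ i, Real.sqrt (p i * q i)
      = Real.sqrt (min (p i) (q i)) * Real.sqrt (max (p i) (q i)) := by
    intro i
    rw [← Real.sqrt_mul (le_min (hp i) (hq i)), min_mul_max]
  have cs := Finset.sum_mul_sq_le_sq_mul_sq Finset.univ
    (fun i => Real.sqrt (min (p i) (q i))) (fun i => Real.sqrt (max (p i) (q i)))
  simp_rw [Real.sq_sqrt (le_min (hp _) (hq _)), Real.sq_sqrt (le_max_of_le_left (hp _))] at cs
  have hmax : ∑ i, max (p i) (q i) ≤ 2 := by
    calc ∑ i, max (p i) (q i) ≤ ∑ i, (p i + q i) := by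
          apply Finset.sum_le_sum; intro i _
          exact max_le (by linarith [hq i]) (by linarith [hp i])
      _ ≤ 2 := by rw [Finset.sum_add_distrib]; linarith
  have hminnn : 0 ≤ ∑ i, min (p i) (q i) :=
    Finset.sum_nonneg fun i _ => le_min (hp i) (hq i)
  simp_rw [key]
  nlinarith [cs]






lemma sqrt_diff_sq_le (u v : ℝ) (hu : 0 ≤ u) (huv : u ≤ v) (hv : 0 < v) :
    (Real.sqrt v - Real.sqrt u)^2 ≤ (v-u)^2/v := by
  have hsv : 0 < Real.sqrt v := Real.sqrt_pos.2 hv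
  have h1 : Real.sqrt v - Real.sqrt u ≤ (v - u) / Real.sqrt v := by
    rw [le_div_iff₀ hsv, sub_mul, Real.mul_self_sqrt hv.le]
    have : u ≤ Real.sqrt u * Real.sqrt v := by
      calc u = Real.sqrt u * Real.sqrt u := (Real.mul_self_sqrt hu).symm
        _ ≤ Real.sqrt u * Real.sqrt v := by
            apply mul_le_mul_of_nonneg_left (Real.sqrt_le_sqrt huv) (Real.sqrt_nonneg u)
    linarith
  have h2 : 0 ≤ Real.sqrt v - Real.sqrt u := by
    have := Real.sqrt_le_sqrt huv; linarith
  calc (Real.sqrt v - Real.sqrt u)^2 ≤ ((v-u)/Real.sqrt v)^2 := by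
        apply pow_le_pow_left₀ h2 h1
    _ = (v-u)^2/v := by rw [div_pow, Real.sq_sqrt hv.le]

lemma affinity_gap_le (e h' : ℝ) (he0 : 0 < e) (he1 : e ≤ 1) (h0 : 0 < h') (h1 : h' ≤ 1) :
    1 - Real.sqrt (((1+h')/2*e) * ((1-h')/2*e))
      - Real.sqrt ((1-(1+h')/2*e)*(1-(1-h')/2*e)) ≤ 3/2*e*h'^2 := by
  set a := (1+h')/2*e with ha
  set b := (1-h')/2*e with hb
  have hb0 : 0 ≤ b := mul_nonneg (by linarith) he0.le
  have ha0 : 0 ≤ a := mul_nonneg (by linarith) he0.le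
  have hab : b ≤ a := by rw [ha, hb]; nlinarith
  have ha1 : a ≤ 1 := by rw [ha]; nlinarith
  have hb12 : b ≤ 1/2 := by rw [hb]; nlinarith
  have h1a : 0 ≤ 1 - a := by linarith
  have h1b : 0 ≤ 1 - b := by linarith
  -- identity
  have hid : 1 - Real.sqrt (a*b) - Real.sqrt ((1-a)*(1-b))
      = ((Real.sqrt a - Real.sqrt b)^2 + (Real.sqrt (1-a) - Real.sqrt (1-b))^2)/2 := by
    have e1 : Real.sqrt a * Real.sqrt b = Real.sqrt (a*b) := (Real.sqrt_mul ha0 b).symm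
    have e2 : Real.sqrt (1-a) * Real.sqrt (1-b) = Real.sqrt ((1-a)*(1-b)) :=
      (Real.sqrt_mul h1a (1-b)).symm
    have s1 := Real.sq_sqrt ha0
    have s2 := Real.sq_sqrt hb0
    have s3 := Real.sq_sqrt h1a
    have s4 := Real.sq_sqrt h1b
    nlinarith [s1, s2, s3, s4, e1, e2]
  rw [hid]
  -- term 1
  have hab' : a * b = (1 - h'^2)/4 * e^2 := by rw [ha, hb]; ring
  have hsab : Real.sqrt (a*b) = Real.sqrt (1 - h'^2) / 2 * e := by
    rw [hab']
    rw [show (1 - h'^2)/4 * e^2 = (1-h'^2) * (e/2)^2 by ring]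
    rw [Real.sqrt_mul (by nlinarith), Real.sqrt_sq (by linarith)]
    ring
  have ht1 : (Real.sqrt a - Real.sqrt b)^2 ≤ e * h'^2 := by
    have expand : (Real.sqrt a - Real.sqrt b)^2 = a + b - 2 * Real.sqrt (a*b) := by
      have e1 : Real.sqrt a * Real.sqrt b = Real.sqrt (a*b) := (Real.sqrt_mul ha0 b).symm
      nlinarith [Real.sq_sqrt ha0, Real.sq_sqrt hb0]
    have habsum : a + b = e := by rw [ha, hb]; ring
    have hh2 : (0:ℝ) ≤ 1 - h'^2 := by nlinarith
    have hsq : 1 - h'^2 ≤ Real.sqrt (1 - h'^2) := by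
      have h5 : ((1 - h'^2))^2 ≤ 1 - h'^2 := by nlinarith
      have h6 := Real.sqrt_le_sqrt h5
      rwa [Real.sqrt_sq hh2] at h6
    rw [expand, habsum, hsab]
    nlinarith [he0.le, hsq]
  -- term 2
  have ht2 : (Real.sqrt (1-a) - Real.sqrt (1-b))^2 ≤ 2 * e^2 * h'^2 := by
    have h2 : (Real.sqrt (1-b) - Real.sqrt (1-a))^2 ≤ ((1-b)-(1-a))^2/(1-b) :=
      sqrt_diff_sq_le (1-a) (1-b) h1a (by linarith) (by linarith)
    have h3 : ((1-b)-(1-a))^2 = (e*h')^2 := by rw [ha, hb]; ring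
    have h4 : ((1-b)-(1-a))^2/(1-b) ≤ (e*h')^2 * 2 := by
      rw [h3, div_le_iff₀ (by linarith)]
      nlinarith [sq_nonneg (e*h')]
    calc (Real.sqrt (1-a) - Real.sqrt (1-b))^2
        = (Real.sqrt (1-b) - Real.sqrt (1-a))^2 := by ring
      _ ≤ ((1-b)-(1-a))^2/(1-b) := h2
      _ ≤ (e*h')^2 * 2 := h4
      _ = 2 * e^2 * h'^2 := by ring
  nlinarith [ht1, ht2]


section Constr
variable {α : Type*} [MeasurableSpace α] [MeasurableSingletonClass α] {V : ℕ}

def qv (h' : ℝ) (b : Bool) : ℝ := if b then (1+h')/2 else (1-h')/2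

def jAtom (x : Fin V → α) (k : Fin V × Fin 3) : α × ℝ × ℝ :=
  (x k.1, if k.2.val = 2 then (0:ℝ) else 1, if k.2.val = 0 then (1:ℝ) else 0)

def jmR (V : ℕ) (e_m h' : ℝ) (σ : Fin V → Bool) (k : Fin V × Fin 3) : ℝ :=
  (1/(V:ℝ)) * (if k.2.val = 0 then qv h' (σ k.1) * e_m
    else if k.2.val = 1 then qv h' (σ k.1) * (1 - e_m) else 1 - qv h' (σ k.1))

def jmeas (x : Fin V → α) (e_m h' : ℝ) (σ : Fin V → Bool) : Measure (α × ℝ × ℝ) :=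
  ∑ k : Fin V × Fin 3, ENNReal.ofReal (jmR V e_m h' σ k) • Measure.dirac (jAtom x k)

def omR (V : ℕ) (e_m h' : ℝ) (σ : Fin V → Bool) (k : Fin V × Bool) : ℝ :=
  (1/(V:ℝ)) * (if k.2 then qv h' (σ k.1) * e_m else 1 - qv h' (σ k.1) * e_m)

def oAtom (x : Fin V → α) (k : Fin V × Bool) : α × ℝ := (x k.1, if k.2 then (1:ℝ) else 0)

open Classical in
def etaF (x : Fin V → α) (h' : ℝ) (g : α → ℝ) : α → ℝ :=
  fun t => if t ∈ Set.range x then (1-h')/2 + h' * g t else g t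

variable {e_m h' : ℝ}

lemma qv_nonneg (hh0 : 0 ≤ h') (hh1 : h' ≤ 1) (b : Bool) : 0 ≤ qv h' b := by
  cases b <;> simp [qv] <;> linarith

lemma qv_le_one (hh0 : 0 ≤ h') (hh1 : h' ≤ 1) (b : Bool) : qv h' b ≤ 1 := by
  cases b <;> simp [qv] <;> linarith

lemma jmR_nonneg (he0 : 0 ≤ e_m) (he1 : e_m ≤ 1) (hh0 : 0 ≤ h') (hh1 : h' ≤ 1)
    (σ : Fin V → Bool) (k : Fin V × Fin 3) : 0 ≤ jmR V e_m h' σ k := by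
  have h1 := qv_nonneg hh0 hh1 (σ k.1)
  have h2 := qv_le_one hh0 hh1 (σ k.1)
  unfold jmR
  have hV : (0:ℝ) ≤ 1/(V:ℝ) := by positivity
  split_ifs <;> apply mul_nonneg hV <;> nlinarith

lemma omR_nonneg (he0 : 0 ≤ e_m) (he1 : e_m ≤ 1) (hh0 : 0 ≤ h') (hh1 : h' ≤ 1)
    (σ : Fin V → Bool) (k : Fin V × Bool) : 0 ≤ omR V e_m h' σ k := by
  have h1 := qv_nonneg hh0 hh1 (σ k.1)
  have h2 := qv_le_one hh0 hh1 (σ k.1)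
  unfold omR
  have hV : (0:ℝ) ≤ 1/(V:ℝ) := by positivity
  split_ifs <;> apply mul_nonneg hV <;> nlinarith

lemma sum_omR (hV : 0 < V) (σ : Fin V → Bool) : ∑ k, omR V e_m h' σ k = 1 := by
  rw [Fintype.sum_prod_type]
  have h1 : ∀ i : Fin V, ∑ b : Bool, omR V e_m h' σ (i, b) = 1/(V:ℝ) := by
    intro i
    simp [omR, Fintype.sum_bool]
    ring
  simp_rw [h1]
  rw [Finset.sum_const]
  simp only [Finset.card_univ, Fintype.card_fin, nsmul_eq_mul]
  have : (V:ℝ) ≠ 0 := Nat.cast_ne_zero.2 hV.ne'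
  field_simp

lemma sum_jmR (hV : 0 < V) (σ : Fin V → Bool) : ∑ k, jmR V e_m h' σ k = 1 := by
  rw [Fintype.sum_prod_type]
  have h1 : ∀ i : Fin V, ∑ j : Fin 3, jmR V e_m h' σ (i, j) = 1/(V:ℝ) := by
    intro i
    rw [Fin.sum_univ_three]
    simp [jmR]
    ring
  simp_rw [h1]
  rw [Finset.sum_const]
  simp only [Finset.card_univ, Fintype.card_fin, nsmul_eq_mul]
  have : (V:ℝ) ≠ 0 := Nat.cast_ne_zero.2 hV.ne'
  field_simp

lemma etaF_at_x (x : Fin V → α) (g : α → ℝ) (σ : Fin V → Bool)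
    (hgx : ∀ i, g (x i) = if σ i then 1 else 0) (i : Fin V) :
    etaF x h' g (x i) = qv h' (σ i) := by
  unfold etaF
  rw [if_pos ⟨i, rfl⟩, hgx i]
  cases hσ : σ i <;> simp [qv] <;> ring

lemma bayes_etaF (x : Fin V → α) (g : α → ℝ) (hg : ∀ t, g t = 0 ∨ g t = 1)
    (hh0 : 0 < h') (hh1 : h' ≤ 1) : bayes (etaF x h' g) = g := by
  funext t
  unfold bayes etaF
  rcases hg t with h | h <;> rw [h] <;> split_ifs with h1 h2 <;> first
    | rfl
    | (exfalso; revert h2; first | push_neg; intros; linarith | (intro h2; linarith))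
    | (exfalso; revert h1; first | push_neg; intros; linarith | (intro h1; linarith))

lemma etaF_mem_Icc (x : Fin V → α) (g : α → ℝ) (hg : ∀ t, g t = 0 ∨ g t = 1)
    (hh0 : 0 < h') (hh1 : h' ≤ 1) (t : α) : 0 ≤ etaF x h' g t ∧ etaF x h' g t ≤ 1 := by
  unfold etaF
  rcases hg t with h | h <;> rw [h] <;> split_ifs <;> constructor <;> norm_num <;> linarith

lemma etaF_margin (x : Fin V → α) (g : α → ℝ) (hg : ∀ t, g t = 0 ∨ g t = 1)
    (hh0 : 0 < h') (hh1 : h' ≤ 1) {h : ℝ} (hh : h ≤ h') (t : α) :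
    h ≤ |2 * etaF x h' g t - 1| := by
  unfold etaF
  rcases hg t with hgt | hgt <;> rw [hgt] <;> split_ifs <;> first
    | (rw [abs_of_nonneg (by linarith)]; linarith)
    | (rw [abs_sub_comm, abs_of_nonneg (by linarith)]; linarith)

lemma etaF_measurable (x : Fin V → α) (g : α → ℝ) (hgm : Measurable g) :
    Measurable (etaF x h' g) := by
  unfold etaF
  exact Measurable.ite (Set.finite_range x).measurableSet
    (measurable_const.add (measurable_const.mul hgm)) hgm

end Constr


section Risky
variable {α : Type*} [MeasurableSpace α] [MeasurableSingletonClass α] {V : ℕ}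
variable {e_m h' : ℝ}

open Classical in
lemma toReal_apply_sum_smul_dirac {β : Type*} [MeasurableSpace β] {K : Type*} [Fintype K]
    (m : K → ℝ) (hm : ∀ k, 0 ≤ m k) (a : K → β) (B : Set β) (hB : MeasurableSet B) :
    ((∑ k, ENNReal.ofReal (m k) • Measure.dirac (a k)) B).toReal
      = ∑ k, (if a k ∈ B then m k else 0) := by
  rw [apply_sum_smul_dirac _ a B hB, ENNReal.toReal_sum]
  · congr 1; ext k
    by_cases hk : a k ∈ B
    · rw [Set.indicator_of_mem hk, if_pos hk]
      simp [ENNReal.toReal_ofReal (hm k)]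
    · rw [Set.indicator_of_notMem hk, if_neg hk]
      simp
  · intro k _
    by_cases hk : a k ∈ B
    · rw [Set.indicator_of_mem hk]
      simp [ENNReal.ofReal_ne_top]
    · rw [Set.indicator_of_notMem hk]
      simp

lemma jmeas_isProb (he0 : 0 ≤ e_m) (he1 : e_m ≤ 1) (hh0 : 0 ≤ h') (hh1 : h' ≤ 1)
    (hV : 0 < V) (x : Fin V → α) (σ : Fin V → Bool) :
    IsProbabilityMeasure (jmeas x e_m h' σ) := by
  constructor
  unfold jmeas
  rw [apply_sum_smul_dirac _ _ _ MeasurableSet.univ]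
  simp only [Set.indicator_univ, Pi.one_apply, mul_one]
  rw [← ENNReal.ofReal_sum_of_nonneg (fun k _ => jmR_nonneg he0 he1 hh0 hh1 σ k)]
  rw [sum_jmR hV σ]
  exact ENNReal.ofReal_one

lemma jmeas_ae (x : Fin V → α) (σ : Fin V → Bool) (P : α × ℝ × ℝ → Prop)
    (hP : MeasurableSet {p | P p}) (hatoms : ∀ k, P (jAtom x k)) :
    ∀ᵐ p ∂(jmeas x e_m h' σ), P p := by
  rw [ae_iff]
  unfold jmeas
  have hc : MeasurableSet {a | ¬ P a} := hP.compl
  rw [apply_sum_smul_dirac _ _ _ hc]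
  apply Finset.sum_eq_zero
  intro k _
  rw [Set.indicator_of_notMem (by simp [hatoms k])]
  simp

open Classical in
lemma risk_jmeas (x : Fin V → α) (σ : Fin V → Bool)
    (he0 : 0 ≤ e_m) (he1 : e_m ≤ 1) (hh0 : 0 ≤ h') (hh1 : h' ≤ 1)
    (g : α → ℝ) (hgm : Measurable g) :
    risk (jmeas x e_m h' σ) (fun p => p.1) (fun p => p.2.1) g
      = ∑ k : Fin V × Fin 3, jmR V e_m h' σ k *
          (if g (x k.1) = (if k.2.val = 2 then (0:ℝ) else 1) then 0 else 1) := by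
  unfold risk
  have hB : MeasurableSet {ω : α × ℝ × ℝ | g ω.1 ≠ ω.2.1} := by
    exact (measurableSet_eq_fun (hgm.comp measurable_fst)
      (measurable_fst.comp measurable_snd)).compl
  unfold jmeas
  rw [toReal_apply_sum_smul_dirac _ (jmR_nonneg he0 he1 hh0 hh1 σ) _ _ hB]
  congr 1; ext k
  by_cases hk : g (x k.1) = (if k.2.val = 2 then (0:ℝ) else 1)
  · rw [if_pos hk, mul_zero, if_neg]
    simp only [Set.mem_setOf_eq, jAtom, ne_eq, not_not]
    exact hk
  · rw [if_neg hk, mul_one, if_pos]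
    simp only [Set.mem_setOf_eq, jAtom, ne_eq]
    exact hk

open Classical in
lemma excess_jmeas (x : Fin V → α) (σ : Fin V → Bool)
    (he0 : 0 ≤ e_m) (he1 : e_m ≤ 1) (hh0 : 0 < h') (hh1 : h' ≤ 1) (hV : 0 < V)
    (gs : α → ℝ) (hgs : ∀ t, gs t = 0 ∨ gs t = 1) (hgsm : Measurable gs)
    (hgsx : ∀ i, gs (x i) = if σ i then 1 else 0)
    (g : α → ℝ) (hg : ∀ t, g t = 0 ∨ g t = 1) (hgm : Measurable g) :
    excessRisk (jmeas x e_m h' σ) (fun p => p.1) (fun p => p.2.1) (etaF x h' gs) g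
      = ∑ i : Fin V, (h'/(V:ℝ)) * (if g (x i) = (if σ i then (1:ℝ) else 0) then 0 else 1) := by
  unfold excessRisk
  rw [bayes_etaF x gs hgs hh0 hh1]
  rw [risk_jmeas x σ he0 he1 hh0.le hh1 g hgm, risk_jmeas x σ he0 he1 hh0.le hh1 gs hgsm]
  rw [← Finset.sum_sub_distrib, Fintype.sum_prod_type]
  congr 1; ext i
  rw [Fin.sum_univ_three]
  have e0 : jmR V e_m h' σ (i, 0) = (1/(V:ℝ)) * (qv h' (σ i) * e_m) := by
    simp [jmR]
  have e1 : jmR V e_m h' σ (i, 1) = (1/(V:ℝ)) * (qv h' (σ i) * (1 - e_m)) := by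
    simp [jmR]
  have e2 : jmR V e_m h' σ (i, 2) = (1/(V:ℝ)) * (1 - qv h' (σ i)) := by
    simp [jmR]
  rw [e0, e1, e2]
  have hy0 : ((0:Fin 3).val = 2) = False := by norm_num
  have hy1 : ((1:Fin 3).val = 2) = False := by norm_num
  have hy2 : ((2:Fin 3).val = 2) = True := by norm_num
  simp only [hy0, hy1, hy2, if_true, if_false]
  rcases hg (x i) with hgi | hgi <;> rw [hgi] <;>
    cases hσ : σ i <;> rw [hgsx i, hσ] <;>
    simp only [if_true, if_false, qv] <;> norm_num <;> ring
end Risky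


section Adm
variable {α : Type*} [MeasurableSpace α] [MeasurableSingletonClass α] {V : ℕ}
variable {e_m h' : ℝ}

def omeas (x : Fin V → α) (e_m h' : ℝ) (σ : Fin V → Bool) : Measure (α × ℝ) :=
  ∑ k : Fin V × Bool, ENNReal.ofReal (omR V e_m h' σ k) • Measure.dirac (oAtom x k)

open Classical in
lemma setIntegral_jmeas (x : Fin V → α) (σ : Fin V → Bool)
    (he0 : 0 ≤ e_m) (he1 : e_m ≤ 1) (hh0 : 0 ≤ h') (hh1 : h' ≤ 1)
    (f : α × ℝ × ℝ → ℝ) (T : Set (α × ℝ × ℝ)) (hT : MeasurableSet T) :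
    ∫ ω in T, f ω ∂(jmeas x e_m h' σ)
      = ∑ k, jmR V e_m h' σ k * (if jAtom x k ∈ T then f (jAtom x k) else 0) := by
  unfold jmeas
  rw [setIntegral_sum_smul_dirac _ (fun k => ENNReal.ofReal_ne_top) _ f T hT]
  congr 1; ext k
  rw [ENNReal.toReal_ofReal (jmR_nonneg he0 he1 hh0 hh1 σ k)]

lemma jmeas_regression (x : Fin V → α) (σ : Fin V → Bool)
    (he0 : 0 ≤ e_m) (he1 : e_m ≤ 1) (hh0 : 0 < h') (hh1 : h' ≤ 1)
    (gs : α → ℝ) (hgsx : ∀ i, gs (x i) = if σ i then 1 else 0)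
    (A : Set α) (hA : MeasurableSet A) :
    ∫ ω in (fun p : α × ℝ × ℝ => p.1) ⁻¹' A, ω.2.1 ∂(jmeas x e_m h' σ)
      = ∫ ω in (fun p : α × ℝ × ℝ => p.1) ⁻¹' A, etaF x h' gs ω.1 ∂(jmeas x e_m h' σ) := by
  classical
  have hT : MeasurableSet ((fun p : α × ℝ × ℝ => p.1) ⁻¹' A) := measurable_fst hA
  rw [setIntegral_jmeas x σ he0 he1 hh0.le hh1 _ _ hT,
    setIntegral_jmeas x σ he0 he1 hh0.le hh1 _ _ hT]
  rw [Fintype.sum_prod_type, Fintype.sum_prod_type]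
  apply Finset.sum_congr rfl
  intro i _
  rw [Fin.sum_univ_three, Fin.sum_univ_three]
  have e0 : jmR V e_m h' σ (i, 0) = (1/(V:ℝ)) * (qv h' (σ i) * e_m) := by simp [jmR]
  have e1 : jmR V e_m h' σ (i, 1) = (1/(V:ℝ)) * (qv h' (σ i) * (1 - e_m)) := by simp [jmR]
  have e2 : jmR V e_m h' σ (i, 2) = (1/(V:ℝ)) * (1 - qv h' (σ i)) := by simp [jmR]
  have hmem : ∀ j : Fin 3, (jAtom x (i, j) ∈ (fun p : α × ℝ × ℝ => p.1) ⁻¹' A) ↔ x i ∈ A := by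
    intro j; simp [jAtom]
  have heta : etaF x h' gs (x i) = qv h' (σ i) := etaF_at_x x gs σ hgsx i
  rw [e0, e1, e2]
  simp only [hmem]
  by_cases hxa : x i ∈ A
  · simp only [if_pos hxa, jAtom]
    norm_num
    try simp only [heta]
    try ring
  · simp only [if_neg hxa]
    try simp

lemma jmeas_propensity_int (x : Fin V → α) (σ : Fin V → Bool)
    (he0 : 0 ≤ e_m) (he1 : e_m ≤ 1) (hh0 : 0 < h') (hh1 : h' ≤ 1)
    (A : Set α) (hA : MeasurableSet A) :
    ∫ ω in (fun p : α × ℝ × ℝ => p.1) ⁻¹' A, ω.2.2 ∂(jmeas x e_m h' σ)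
      = ∫ ω in (fun p : α × ℝ × ℝ => p.1) ⁻¹' A, e_m * ω.2.1 ∂(jmeas x e_m h' σ) := by
  classical
  have hT : MeasurableSet ((fun p : α × ℝ × ℝ => p.1) ⁻¹' A) := measurable_fst hA
  rw [setIntegral_jmeas x σ he0 he1 hh0.le hh1 _ _ hT,
    setIntegral_jmeas x σ he0 he1 hh0.le hh1 _ _ hT]
  rw [Fintype.sum_prod_type, Fintype.sum_prod_type]
  apply Finset.sum_congr rfl
  intro i _
  rw [Fin.sum_univ_three, Fin.sum_univ_three]
  have e0 : jmR V e_m h' σ (i, 0) = (1/(V:ℝ)) * (qv h' (σ i) * e_m) := by simp [jmR]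
  have e1 : jmR V e_m h' σ (i, 1) = (1/(V:ℝ)) * (qv h' (σ i) * (1 - e_m)) := by simp [jmR]
  have e2 : jmR V e_m h' σ (i, 2) = (1/(V:ℝ)) * (1 - qv h' (σ i)) := by simp [jmR]
  have hmem : ∀ j : Fin 3, (jAtom x (i, j) ∈ (fun p : α × ℝ × ℝ => p.1) ⁻¹' A) ↔ x i ∈ A := by
    intro j; simp [jAtom]
  rw [e0, e1, e2]
  simp only [hmem]
  by_cases hxa : x i ∈ A
  · simp only [if_pos hxa, jAtom]
    norm_num
    try ring
  · simp only [if_neg hxa]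
    try simp

lemma map_jmeas (x : Fin V → α) (σ : Fin V → Bool)
    (he0 : 0 ≤ e_m) (he1 : e_m ≤ 1) (hh0 : 0 ≤ h') (hh1 : h' ≤ 1) :
    (jmeas x e_m h' σ).map (fun p : α × ℝ × ℝ => (p.1, p.2.2)) = omeas x e_m h' σ := by
  classical
  have hπ : Measurable (fun p : α × ℝ × ℝ => (p.1, p.2.2)) :=
    measurable_fst.prodMk (measurable_snd.comp measurable_snd)
  ext B hB
  rw [Measure.map_apply hπ hB]
  unfold jmeas omeas
  rw [apply_sum_smul_dirac _ _ _ (hπ hB), apply_sum_smul_dirac _ _ _ hB]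
  rw [Fintype.sum_prod_type, Fintype.sum_prod_type]
  apply Finset.sum_congr rfl
  intro i _
  rw [Fin.sum_univ_three, Fintype.sum_bool]
  have e0 : jmR V e_m h' σ (i, 0) = (1/(V:ℝ)) * (qv h' (σ i) * e_m) := by simp [jmR]
  have e1 : jmR V e_m h' σ (i, 1) = (1/(V:ℝ)) * (qv h' (σ i) * (1 - e_m)) := by simp [jmR]
  have e2 : jmR V e_m h' σ (i, 2) = (1/(V:ℝ)) * (1 - qv h' (σ i)) := by simp [jmR]
  have o1 : omR V e_m h' σ (i, true) = (1/(V:ℝ)) * (qv h' (σ i) * e_m) := by simp [omR]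
  have o0 : omR V e_m h' σ (i, false) = (1/(V:ℝ)) * (1 - qv h' (σ i) * e_m) := by simp [omR]
  have m0 : jAtom x (i, 0) ∈ (fun p : α × ℝ × ℝ => (p.1, p.2.2)) ⁻¹' B
      ↔ (x i, (1:ℝ)) ∈ B := by simp [jAtom]
  have m1 : jAtom x (i, 1) ∈ (fun p : α × ℝ × ℝ => (p.1, p.2.2)) ⁻¹' B
      ↔ (x i, (0:ℝ)) ∈ B := by simp [jAtom]
  have m2 : jAtom x (i, 2) ∈ (fun p : α × ℝ × ℝ => (p.1, p.2.2)) ⁻¹' B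
      ↔ (x i, (0:ℝ)) ∈ B := by simp [jAtom]
  have ot : oAtom x (i, true) = (x i, (1:ℝ)) := by simp [oAtom]
  have of' : oAtom x (i, false) = (x i, (0:ℝ)) := by simp [oAtom]
  rw [e0, e1, e2, o1, o0, ot, of']
  have hq0 := qv_nonneg hh0 hh1 (σ i)
  have hq1 := qv_le_one hh0 hh1 (σ i)
  have hVnn : (0:ℝ) ≤ 1/(V:ℝ) := by positivity
  have nn1 : (0:ℝ) ≤ 1/(V:ℝ) * (qv h' (σ i) * (1 - e_m)) :=
    mul_nonneg hVnn (by nlinarith)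
  have nn2 : (0:ℝ) ≤ 1/(V:ℝ) * (1 - qv h' (σ i)) := mul_nonneg hVnn (by nlinarith)
  simp only [Set.indicator_apply, Pi.one_apply]
  simp only [m0, m1, m2]
  by_cases hb1 : (x i, (1:ℝ)) ∈ B <;> by_cases hb0 : (x i, (0:ℝ)) ∈ B <;>
    simp only [hb1, hb0, if_true, if_false, mul_one, mul_zero, add_zero, zero_add] <;>
    first
      | rfl
      | (rw [← ENNReal.ofReal_add nn1 nn2]; congr 1; ring)
      | (rw [add_assoc]; congr 1; rw [← ENNReal.ofReal_add nn1 nn2]; congr 1; ring)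
end Adm


section Ass
variable {α : Type*} [MeasurableSpace α] [MeasurableSingletonClass α] {V : ℕ}
variable {e_m h' : ℝ}

lemma integral_pi_omeas (he0 : 0 ≤ e_m) (he1 : e_m ≤ 1) (hh0 : 0 ≤ h') (hh1 : h' ≤ 1)
    (x : Fin V → α) (σ : Fin V → Bool) (n : ℕ) (F : (Fin n → α × ℝ) → ℝ) :
    ∫ z, F z ∂(Measure.pi fun _ : Fin n => omeas x e_m h' σ)
      = ∑ φ : Fin n → Fin V × Bool,
          (∏ i, omR V e_m h' σ (φ i)) * F (fun i => oAtom x (φ i)) := by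
  unfold omeas
  rw [pi_sum_smul_dirac n _ (fun k => ENNReal.ofReal_ne_top) _]
  rw [integral_sum_smul_dirac _
    (fun φ => (ENNReal.prod_lt_top (fun i _ => ENNReal.ofReal_lt_top)).ne) _ F]
  apply Finset.sum_congr rfl
  intro φ _
  congr 1
  rw [ENNReal.toReal_prod]
  apply Finset.prod_congr rfl
  intro i _
  exact ENNReal.toReal_ofReal (omR_nonneg he0 he1 hh0 hh1 σ (φ i))

def flipb (j : Fin V) (σ : Fin V → Bool) : Fin V → Bool := Function.update σ j (!σ j)

lemma flipb_invol (j : Fin V) : Function.Involutive (flipb (V := V) j) := by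
  intro σ
  funext i
  by_cases hij : i = j
  · subst hij; simp [flipb, Function.update_self]
  · simp [flipb, Function.update_of_ne hij]

lemma flipb_at (j : Fin V) (σ : Fin V → Bool) : flipb j σ j = !σ j := by
  simp [flipb, Function.update_self]

lemma flipb_ne (j : Fin V) (σ : Fin V → Bool) {i : Fin V} (hij : i ≠ j) :
    flipb j σ i = σ i := by
  simp [flipb, Function.update_of_ne hij]

lemma qv_mul_qv_not (b : Bool) : qv h' b * qv h' (!b) = (1+h')/2 * ((1-h')/2) := by
  cases b <;> simp [qv] <;> ring

/-- The one-observation Hellinger affinity between `σ` and `flipb j σ`. -/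
lemma A1_ge (he0 : 0 < e_m) (he1 : e_m ≤ 1) (hh0 : 0 < h') (hh1 : h' ≤ 1) (hV : 0 < V)
    (x : Fin V → α) (σ : Fin V → Bool) (j : Fin V) :
    1 - (3/2) * e_m * h'^2 / (V:ℝ) ≤
      ∑ k : Fin V × Bool, Real.sqrt (omR V e_m h' σ k * omR V e_m h' (flipb j σ) k) := by
  have hVnn : (0:ℝ) < 1/(V:ℝ) := by positivity
  have key : ∀ i : Fin V, i ≠ j →
      ∑ b : Bool, Real.sqrt (omR V e_m h' σ (i,b) * omR V e_m h' (flipb j σ) (i,b))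
        = 1/(V:ℝ) := by
    intro i hij
    have hf : ∀ b : Bool, omR V e_m h' (flipb j σ) (i,b) = omR V e_m h' σ (i,b) := by
      intro b; unfold omR; rw [flipb_ne j σ hij]
    rw [Fintype.sum_bool]
    rw [hf true, hf false]
    rw [Real.sqrt_mul_self (omR_nonneg he0.le he1 hh0.le hh1 σ (i, true)),
      Real.sqrt_mul_self (omR_nonneg he0.le he1 hh0.le hh1 σ (i, false))]
    have t1 : omR V e_m h' σ (i, true) = 1/(V:ℝ) * (qv h' (σ i) * e_m) := by simp [omR]
    have t0 : omR V e_m h' σ (i, false) = 1/(V:ℝ) * (1 - qv h' (σ i) * e_m) := by simp [omR]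
    rw [t1, t0]
    ring
  -- the j-th term
  set a := qv h' (σ j) * e_m with ha
  set b := qv h' (!σ j) * e_m with hb
  have hq0 := qv_nonneg hh0.le hh1 (σ j)
  have hq1 := qv_le_one hh0.le hh1 (σ j)
  have hq0' := qv_nonneg hh0.le hh1 (!σ j)
  have hq1' := qv_le_one hh0.le hh1 (!σ j)
  have hterm : ∑ b' : Bool, Real.sqrt (omR V e_m h' σ (j,b') * omR V e_m h' (flipb j σ) (j,b'))
      = (1/(V:ℝ)) * (Real.sqrt (a*b) + Real.sqrt ((1-a)*(1-b))) := by
    rw [Fintype.sum_bool]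
    have hfj : flipb j σ j = !σ j := flipb_at j σ
    have e1 : omR V e_m h' σ (j, true) = (1/(V:ℝ)) * a := by simp [omR, ha]
    have e2 : omR V e_m h' (flipb j σ) (j, true) = (1/(V:ℝ)) * b := by simp [omR, hfj, hb]
    have e3 : omR V e_m h' σ (j, false) = (1/(V:ℝ)) * (1-a) := by
      simp [omR, ha]; try ring
    have e4 : omR V e_m h' (flipb j σ) (j, false) = (1/(V:ℝ)) * (1-b) := by
      simp [omR, hfj, hb]; try ring
    rw [e1, e2, e3, e4]
    rw [show (1/(V:ℝ) * a) * (1/(V:ℝ) * b) = (1/(V:ℝ))^2 * (a*b) by ring]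
    rw [show (1/(V:ℝ) * (1-a)) * (1/(V:ℝ) * (1-b)) = (1/(V:ℝ))^2 * ((1-a)*(1-b)) by ring]
    rw [Real.sqrt_mul (sq_nonneg _), Real.sqrt_mul (sq_nonneg _), Real.sqrt_sq hVnn.le]
    ring
  -- assemble the sum
  rw [Fintype.sum_prod_type]
  rw [← Finset.add_sum_erase _ _ (Finset.mem_univ j)]
  have hrest : ∑ i ∈ Finset.univ.erase j,
      (∑ b' : Bool, Real.sqrt (omR V e_m h' σ (i,b') * omR V e_m h' (flipb j σ) (i,b')))
        = ((V:ℝ) - 1) * (1/(V:ℝ)) := by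
    rw [Finset.sum_congr rfl (fun i hi => key i (Finset.ne_of_mem_erase hi))]
    rw [Finset.sum_const, Finset.card_erase_of_mem (Finset.mem_univ j)]
    simp only [Finset.card_univ, Fintype.card_fin, nsmul_eq_mul]
    congr 1
    rw [Nat.cast_sub hV]
    norm_num
  rw [hterm, hrest]
  -- now use the affinity gap bound
  have hgap : 1 - Real.sqrt (a*b) - Real.sqrt ((1-a)*(1-b)) ≤ 3/2*e_m*h'^2 := by
    have hmain := affinity_gap_le e_m h' he0 he1 hh0 hh1
    cases hσ : σ j
    · have hab : a * b = ((1+h')/2*e_m) * ((1-h')/2*e_m) := by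
        rw [ha, hb, hσ]; simp [qv]; ring
      have hab2 : (1-a)*(1-b) = (1-(1+h')/2*e_m)*(1-(1-h')/2*e_m) := by
        rw [ha, hb, hσ]; simp [qv]; ring
      rw [hab, hab2]; linarith
    · have hab : a * b = ((1+h')/2*e_m) * ((1-h')/2*e_m) := by
        rw [ha, hb, hσ]; simp [qv]
      have hab2 : (1-a)*(1-b) = (1-(1+h')/2*e_m)*(1-(1-h')/2*e_m) := by
        rw [ha, hb, hσ]; simp [qv]
      rw [hab, hab2]; linarith
  have hV1 : (1:ℝ) ≤ (V:ℝ) := by exact_mod_cast hV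
  have expand : ((V:ℝ) - 1) * (1/(V:ℝ)) = 1 - 1/(V:ℝ) := by field_simp
  rw [expand]
  have hS : 1 - (Real.sqrt (a*b) + Real.sqrt ((1-a)*(1-b))) ≤ 3/2*e_m*h'^2 := by linarith
  have hmul := mul_le_mul_of_nonneg_left hS hVnn.le
  have hdiv : 3/2*e_m*h'^2/(V:ℝ) = 1/(V:ℝ) * (3/2*e_m*h'^2) := by ring
  nlinarith [hmul]

lemma A1_pow_ge {A1 : ℝ} (n : ℕ) (hn2 : 2 ≤ n) (hA1 : 1 - 3/(2*(n:ℝ)) ≤ A1) :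
    Real.exp (-3) ≤ A1 ^ n := by
  have hn0 : (0:ℝ) < n := by exact_mod_cast (by omega : 0 < n)
  have ht0 : (0:ℝ) ≤ 3/(2*(n:ℝ)) := by positivity
  have ht1 : 3/(2*(n:ℝ)) ≤ 3/4 := by
    rw [div_le_div_iff₀ (by positivity) (by norm_num)]
    have : (2:ℝ) ≤ (n:ℝ) := by exact_mod_cast hn2
    nlinarith
  have hexp := exp_neg_two_le (3/(2*(n:ℝ))) ht0 ht1
  have hstep : Real.exp (-(2*(3/(2*(n:ℝ))))) ^ n ≤ A1 ^ n := by
    apply pow_le_pow_left₀ (Real.exp_pos _).le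
    linarith
  refine le_trans ?_ hstep
  rw [← Real.exp_nat_mul]
  apply le_of_eq
  congr 1
  field_simp
end Ass

set_option maxHeartbeats 4000000

/-- **Theorem 2, case C₂ (Lower bound on minimax risk under SCAR assumption).**
Under the SCAR assumption `e(x) = e_m` with `0 < e_m ≤ 1`, if `V ≥ 2`, `n·e_m ≥ V` and
`0 < h ≤ h' = √(V/(n·e_m))`, then there is an absolute constant `κ₂ > 0` with
`R(S,h) ≥ κ₂·√((V−1)/(n·e_m))`. -/
theorem minimax_lower_bound_SCAR_case2 :
    ∃ κ₂ : ℝ, 0 < κ₂ ∧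
      ∀ (d : ℕ) (𝒮 : Set ((Fin d → ℝ) → ℝ)) (V n : ℕ) (e_m h : ℝ),
        (∀ g ∈ 𝒮, IsClassifier g) → HasVCDim 𝒮 V →
        2 ≤ V → 0 < e_m → e_m ≤ 1 → (V : ℝ) ≤ (n : ℝ) * e_m →
        0 < h → h ≤ Real.sqrt ((V : ℝ) / ((n : ℝ) * e_m)) →
        κ₂ * Real.sqrt (((V : ℝ) - 1) / ((n : ℝ) * e_m)) ≤
          minimaxRisk (fun _ : Fin d → ℝ => e_m) 𝒮 h n := by
  classical
  refine ⟨Real.exp (-6) / 4, by positivity, ?_⟩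
  intro d 𝒮 V n e_m h hS hVC hV2 he0 he1 hne hh0 hhle
  set h' := Real.sqrt ((V:ℝ) / ((n:ℝ) * e_m)) with hh'def
  -- basic numeric facts
  have hVpos : 0 < V := by omega
  have hVr : (2:ℝ) ≤ (V:ℝ) := by exact_mod_cast hV2
  have hnr : (2:ℝ) ≤ (n:ℝ) := by
    have : (V:ℝ) ≤ (n:ℝ) := le_trans hne (by nlinarith [Nat.cast_nonneg (α := ℝ) n])
    linarith
  have hn2 : 2 ≤ n := by exact_mod_cast hnr
  have hnpos : (0:ℝ) < (n:ℝ) := by linarith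
  have hnem : (0:ℝ) < (n:ℝ) * e_m := by linarith
  have hfrac_nonneg : (0:ℝ) ≤ (V:ℝ) / ((n:ℝ)*e_m) := by positivity
  have h'pos : 0 < h' := Real.sqrt_pos.2 (by positivity)
  have h'sq : h'^2 = (V:ℝ) / ((n:ℝ)*e_m) := Real.sq_sqrt hfrac_nonneg
  have h'le1 : h' ≤ 1 := by
    rw [hh'def, show (1:ℝ) = Real.sqrt 1 from (Real.sqrt_one).symm]
    apply Real.sqrt_le_sqrt
    rw [div_le_one hnem]; exact hne
  have hhh' : h ≤ h' := hhle
  -- shattered points and classifiers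
  obtain ⟨xs, hshat⟩ := hVC.1
  choose gg hmem hval using hshat
  have hgval : ∀ σ : Fin V → Bool, ∀ i, gg σ (xs i) = if σ i then 1 else 0 := hval
  have hgcl : ∀ σ, ∀ t, gg σ t = 0 ∨ gg σ t = 1 := fun σ => (hS (gg σ) (hmem σ)).2
  have hgm : ∀ σ, Measurable (gg σ) := fun σ => (hS (gg σ) (hmem σ)).1
  -- admissible distributions
  have padm : ∀ σ : Fin V → Bool,
      PUAdmissible (fun _ : (Fin d → ℝ) => e_m) 𝒮 h (jmeas xs e_m h' σ) (etaF xs h' (gg σ)) := by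
    intro σ
    refine ⟨jmeas_isProb he0.le he1 h'pos.le h'le1 hVpos xs σ, ?_, ?_, ?_, ?_, ?_⟩
    · apply jmeas_ae xs σ
      · have m1 : Measurable fun p : (Fin d → ℝ) × ℝ × ℝ => p.2.1 :=
          measurable_fst.comp measurable_snd
        have m2 : Measurable fun p : (Fin d → ℝ) × ℝ × ℝ => p.2.2 :=
          measurable_snd.comp measurable_snd
        exact (((m1 (measurableSet_singleton 0)).union (m1 (measurableSet_singleton 1))).inter
          ((m2 (measurableSet_singleton 0)).union (m2 (measurableSet_singleton 1))))
      · intro k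
        unfold jAtom
        constructor <;> split_ifs <;> try simp
        all_goals omega
    · exact ⟨etaF_measurable xs (gg σ) (hgm σ),
        etaF_mem_Icc xs (gg σ) (hgcl σ) h'pos h'le1,
        fun A hA => jmeas_regression xs σ he0.le he1 h'pos h'le1 (gg σ) (hgval σ) A hA⟩
    · refine ⟨measurable_const, fun t => ⟨he0.le, he1⟩, ?_, ?_⟩
      · apply jmeas_ae xs σ
        · have m1 : Measurable fun p : (Fin d → ℝ) × ℝ × ℝ => p.2.1 :=
            measurable_fst.comp measurable_snd
          have m2 : Measurable fun p : (Fin d → ℝ) × ℝ × ℝ => p.2.2 :=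
            measurable_snd.comp measurable_snd
          exact measurableSet_le m2 m1
        · intro k
          unfold jAtom
          split_ifs <;> try norm_num
          all_goals omega
      · intro A hA
        exact jmeas_propensity_int xs σ he0.le he1 h'pos h'le1 A hA
    · rw [bayes_etaF xs (gg σ) (hgcl σ) h'pos h'le1]
      exact hmem σ
    · exact etaF_margin xs (gg σ) (hgcl σ) h'pos h'le1 hhh'
  -- nonempty estimator type
  haveI hne' : Nonempty {f : (Fin n → (Fin d → ℝ) × ℝ) → (Fin d → ℝ) → ℝ // ∀ z, f z ∈ 𝒮} :=
    ⟨⟨fun _ => gg (fun _ => true), fun _ => hmem _⟩⟩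
  unfold _root_.minimaxRisk
  apply le_ciInf
  intro ghat
  set F := ghat.1 with hF
  -- the value of the objective at σ
  set T : (Fin V → Bool) → ℝ := fun σ =>
    ∫ z, excessRisk (jmeas xs e_m h' σ) (fun p => p.1) (fun p => p.2.1)
      (etaF xs h' (gg σ)) (F z)
      ∂(Measure.pi fun _ : Fin n => (jmeas xs e_m h' σ).map (fun p => (p.1, p.2.2))) with hT
  -- rewrite T σ as a finite sum
  have hTsum : ∀ σ, T σ = ∑ φ : Fin n → Fin V × Bool,
      (∏ i, omR V e_m h' σ (φ i)) *
        ∑ j : Fin V, (h'/(V:ℝ)) *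
          (if F (fun i => oAtom xs (φ i)) (xs j) = (if σ j then (1:ℝ) else 0) then 0 else 1) := by
    intro σ
    rw [hT]
    simp only
    rw [show (Measure.pi fun _ : Fin n => (jmeas xs e_m h' σ).map (fun p : (Fin d → ℝ) × ℝ × ℝ => (p.1, p.2.2)))
        = (Measure.pi fun _ : Fin n => omeas xs e_m h' σ) by
      congr 1; funext _; exact map_jmeas xs σ he0.le he1 h'pos.le h'le1]
    rw [integral_pi_omeas he0.le he1 h'pos.le h'le1 xs σ n _]
    apply Finset.sum_congr rfl
    intro φ _
    congr 1
    exact excess_jmeas xs σ he0.le he1 h'pos h'le1 hVpos (gg σ) (hgcl σ) (hgm σ) (hgval σ)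
      (F (fun i => oAtom xs (φ i)))
      (hS _ (ghat.2 (fun i => oAtom xs (φ i)))).2 (hS _ (ghat.2 _)).1
  -- disagreement sums
  set w : (Fin V → Bool) → (Fin n → Fin V × Bool) → ℝ := fun σ φ => ∏ i, omR V e_m h' σ (φ i)
    with hw
  have hwnn : ∀ σ φ, 0 ≤ w σ φ := fun σ φ =>
    Finset.prod_nonneg fun i _ => omR_nonneg he0.le he1 h'pos.le h'le1 σ (φ i)
  have hwsum : ∀ σ, ∑ φ, w σ φ = 1 := by
    intro σ
    rw [hw]
    simp only
    rw [← Fintype.sum_pow, sum_omR hVpos σ, one_pow]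
  set D : (Fin V → Bool) → Fin V → ℝ := fun σ j => ∑ φ, w σ φ *
    (if F (fun i => oAtom xs (φ i)) (xs j) = (if σ j then (1:ℝ) else 0) then 0 else 1) with hD
  have hTD : ∀ σ, T σ = ∑ j, (h'/(V:ℝ)) * D σ j := by
    intro σ
    rw [hTsum σ, hD]
    simp only
    simp_rw [Finset.mul_sum]
    rw [Finset.sum_comm]
    apply Finset.sum_congr rfl
    intro j _
    apply Finset.sum_congr rfl
    intro φ _
    ring
  -- per coordinate, per pair bound
  have hpair : ∀ (j : Fin V) (σ : Fin V → Bool),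
      Real.exp (-6) / 2 ≤ D σ j + D (flipb j σ) j := by
    intro j σ
    set σ' := flipb j σ with hσ'
    have heq : (3/2) * e_m * h'^2 / (V:ℝ) = 3/(2*(n:ℝ)) := by
      rw [h'sq]
      field_simp
    have hA1 : 1 - 3/(2*(n:ℝ)) ≤
        ∑ k : Fin V × Bool, Real.sqrt (omR V e_m h' σ k * omR V e_m h' σ' k) := by
      have h5 := A1_ge he0 he1 h'pos h'le1 hVpos xs σ j
      rw [heq] at h5
      exact h5
    have hApow := A1_pow_ge n hn2 hA1
    have hsqrt : ∑ φ : Fin n → Fin V × Bool, Real.sqrt (w σ φ * w σ' φ)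
        = (∑ k : Fin V × Bool, Real.sqrt (omR V e_m h' σ k * omR V e_m h' σ' k))^n := by
      rw [Fintype.sum_pow]
      apply Finset.sum_congr rfl
      intro φ _
      rw [hw]
      simp only
      rw [← Finset.prod_mul_distrib, sqrt_finset_prod]
      intro i _
      exact mul_nonneg (omR_nonneg he0.le he1 h'pos.le h'le1 σ (φ i))
        (omR_nonneg he0.le he1 h'pos.le h'le1 σ' (φ i))
    have hmin := lecam_sum_min (w σ) (w σ') (hwnn σ) (hwnn σ')
      (le_of_eq (hwsum σ)) (le_of_eq (hwsum σ'))
    have hDD : ∑ φ : Fin n → Fin V × Bool, min (w σ φ) (w σ' φ) ≤ D σ j + D σ' j := by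
      rw [hD]
      simp only
      rw [← Finset.sum_add_distrib]
      apply Finset.sum_le_sum
      intro φ _
      set v := F (fun i => oAtom xs (φ i)) (xs j) with hv
      by_cases h1 : v = (if σ j then (1:ℝ) else 0)
      · rw [if_pos h1]
        have h2 : v ≠ (if σ' j then (1:ℝ) else 0) := by
          rw [hσ', flipb_at]
          cases hc : σ j <;> rw [hc] at h1 <;> simp only [Bool.not_false, Bool.not_true,
            if_true, if_false] at h1 ⊢ <;> rw [h1] <;> norm_num
        rw [if_neg h2]
        have h3 := min_le_right (w σ φ) (w σ' φ)
        nlinarith [hwnn σ φ, hwnn σ' φ]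
      · rw [if_neg h1]
        have h3 := min_le_left (w σ φ) (w σ' φ)
        have hind : (0:ℝ) ≤ w σ' φ * (if v = (if σ' j then (1:ℝ) else 0) then 0 else 1) := by
          split_ifs <;> simp [hwnn σ' φ]
        nlinarith [hwnn σ φ]
    have hexp2 : Real.exp (-6) = Real.exp (-3) * Real.exp (-3) := by
      rw [← Real.exp_add]; norm_num
    have hApos : (0:ℝ) ≤ Real.exp (-3) := (Real.exp_pos _).le
    calc Real.exp (-6) / 2 = (Real.exp (-3))^2 / 2 := by rw [hexp2]; ring
      _ ≤ ((∑ k : Fin V × Bool,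
            Real.sqrt (omR V e_m h' σ k * omR V e_m h' σ' k))^n)^2 / 2 := by
          have := pow_le_pow_left₀ hApos hApow 2
          linarith
      _ = (∑ φ : Fin n → Fin V × Bool, Real.sqrt (w σ φ * w σ' φ))^2 / 2 := by rw [hsqrt]
      _ ≤ ∑ φ : Fin n → Fin V × Bool, min (w σ φ) (w σ' φ) := hmin
      _ ≤ D σ j + D σ' j := hDD
  -- sum over σ for fixed j
  have hcard : (Finset.univ : Finset (Fin V → Bool)).card = 2^V := by
    simp [Finset.card_univ]
  have hDj : ∀ j : Fin V, (2^V : ℝ) * (Real.exp (-6)/4) ≤ ∑ σ : Fin V → Bool, D σ j := by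
    intro j
    have hflip : ∑ σ : Fin V → Bool, D (flipb j σ) j = ∑ σ : Fin V → Bool, D σ j :=
      Equiv.sum_comp (Function.Involutive.toPerm _ (flipb_invol j)) (fun σ => D σ j)
    have hsum2 : (2^V:ℝ) * (Real.exp (-6)/2)
        ≤ ∑ σ : Fin V → Bool, (D σ j + D (flipb j σ) j) := by
      calc (2^V:ℝ) * (Real.exp (-6)/2)
          = ∑ _σ : Fin V → Bool, Real.exp (-6)/2 := by
            rw [Finset.sum_const, hcard]; simp [nsmul_eq_mul]; try ring
        _ ≤ _ := Finset.sum_le_sum fun σ _ => hpair j σ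
    rw [Finset.sum_add_distrib, hflip] at hsum2
    linarith
  -- total sum over σ
  have hsumT : (2^V : ℝ) * (h' * (Real.exp (-6)/4)) ≤ ∑ σ : Fin V → Bool, T σ := by
    have hswap : ∑ σ : Fin V → Bool, T σ = ∑ j : Fin V, (h'/(V:ℝ)) * ∑ σ : Fin V → Bool, D σ j := by
      simp_rw [hTD]
      rw [Finset.sum_comm]
      apply Finset.sum_congr rfl
      intro j _
      rw [Finset.mul_sum]
    rw [hswap]
    have hstep : ∀ j : Fin V, (h'/(V:ℝ)) * ((2^V:ℝ) * (Real.exp (-6)/4))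
        ≤ (h'/(V:ℝ)) * ∑ σ : Fin V → Bool, D σ j := by
      intro j
      apply mul_le_mul_of_nonneg_left (hDj j) (by positivity)
    calc (2^V : ℝ) * (h' * (Real.exp (-6)/4))
        = ∑ _j : Fin V, (h'/(V:ℝ)) * ((2^V:ℝ) * (Real.exp (-6)/4)) := by
          rw [Finset.sum_const]
          simp only [Finset.card_univ, Fintype.card_fin, nsmul_eq_mul]
          field_simp
      _ ≤ _ := Finset.sum_le_sum fun j _ => hstep j
  -- extract a good σ₀
  obtain ⟨σ₀, hσ₀⟩ : ∃ σ₀ : Fin V → Bool, h' * (Real.exp (-6)/4) ≤ T σ₀ := by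
    by_contra hcon
    push_neg at hcon
    have hlt : ∑ σ : Fin V → Bool, T σ < ∑ _σ : Fin V → Bool, h' * (Real.exp (-6)/4) :=
      Finset.sum_lt_sum_of_nonempty Finset.univ_nonempty (fun σ _ => hcon σ)
    rw [Finset.sum_const, hcard] at hlt
    simp only [nsmul_eq_mul] at hlt
    push_cast at hlt
    linarith
  -- upper bound for sup index
  have hbdd : BddAbove (Set.range fun q : {q : Measure ((Fin d → ℝ) × ℝ × ℝ) × ((Fin d → ℝ) → ℝ) //
      PUAdmissible (fun _ : (Fin d → ℝ) => e_m) 𝒮 h q.1 q.2} =>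
        ∫ z, excessRisk q.1.1 (fun p => p.1) (fun p => p.2.1) q.1.2 (F z)
          ∂(Measure.pi fun _ : Fin n => q.1.1.map (fun p => (p.1, p.2.2)))) := by
    refine ⟨1, ?_⟩
    rintro r ⟨q, rfl⟩
    haveI hprob : IsProbabilityMeasure q.1.1 := q.2.1
    haveI : IsProbabilityMeasure (q.1.1.map (fun p : (Fin d → ℝ) × ℝ × ℝ => (p.1, p.2.2))) :=
      Measure.isProbabilityMeasure_map (measurable_fst.prodMk
        (measurable_snd.comp measurable_snd)).aemeasurable
    haveI : IsProbabilityMeasure (Measure.pi fun _ : Fin n =>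
        q.1.1.map (fun p : (Fin d → ℝ) × ℝ × ℝ => (p.1, p.2.2))) :=
      MeasureTheory.Measure.pi.instIsProbabilityMeasure _
    have hpt : ∀ z, excessRisk q.1.1 (fun p => p.1) (fun p => p.2.1) q.1.2 (F z) ≤ 1 := by
      intro z
      unfold excessRisk risk
      have h1 : (q.1.1 {ω | F z ω.1 ≠ ω.2.1}).toReal ≤ 1 := by
        have h6 := prob_le_one (μ := q.1.1) (s := {ω | F z ω.1 ≠ ω.2.1})
        have := ENNReal.toReal_mono ENNReal.one_ne_top h6
        simpa using this
      have h2 : (0:ℝ) ≤ (q.1.1 {ω | bayes q.1.2 ω.1 ≠ ω.2.1}).toReal := ENNReal.toReal_nonneg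
      have h3 : {ω : (Fin d → ℝ) × ℝ × ℝ | F z ((fun p : (Fin d → ℝ) × ℝ × ℝ => p.1) ω)
          ≠ (fun p : (Fin d → ℝ) × ℝ × ℝ => p.2.1) ω} = {ω | F z ω.1 ≠ ω.2.1} := rfl
      have h4 : {ω : (Fin d → ℝ) × ℝ × ℝ | bayes q.1.2 ((fun p : (Fin d → ℝ) × ℝ × ℝ => p.1) ω)
          ≠ (fun p : (Fin d → ℝ) × ℝ × ℝ => p.2.1) ω} = {ω | bayes q.1.2 ω.1 ≠ ω.2.1} := rfl
      rw [h3, h4]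
      linarith
    by_cases hInt : Integrable (fun z => excessRisk q.1.1 (fun p => p.1) (fun p => p.2.1)
        q.1.2 (F z)) (Measure.pi fun _ : Fin n => q.1.1.map (fun p => (p.1, p.2.2)))
    · calc ∫ z, excessRisk q.1.1 (fun p => p.1) (fun p => p.2.1) q.1.2 (F z)
            ∂(Measure.pi fun _ : Fin n => q.1.1.map (fun p => (p.1, p.2.2)))
          ≤ ∫ _z, (1:ℝ) ∂(Measure.pi fun _ : Fin n =>
              q.1.1.map (fun p : (Fin d → ℝ) × ℝ × ℝ => (p.1, p.2.2))) :=
            integral_mono hInt (integrable_const 1) hpt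
        _ = 1 := by simp
    · exact (le_of_eq (integral_undef hInt)).trans (by norm_num)
  -- conclude
  have htarget : Real.sqrt (((V:ℝ) - 1) / ((n:ℝ) * e_m)) ≤ h' := by
    rw [hh'def]
    apply Real.sqrt_le_sqrt
    gcongr
    linarith
  refine le_ciSup_of_le hbdd
    ⟨(jmeas xs e_m h' σ₀, etaF xs h' (gg σ₀)), padm σ₀⟩ ?_
  calc Real.exp (-6)/4 * Real.sqrt (((V:ℝ) - 1) / ((n:ℝ) * e_m))
      ≤ Real.exp (-6)/4 * h' := by
        apply mul_le_mul_of_nonneg_left htarget (by positivity)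
    _ = h' * (Real.exp (-6)/4) := by ring
    _ ≤ T σ₀ := hσ₀
end
end

section
/- Assume the propensity satisfies e(x) ≥ e_m > 0 for all x ∈ ℝ^d and set C_e = 2/e_m − 1. Then for any pair of classifiers (g, g'), Var[r_SAR(g',(X,S)) − r_SAR(g,(X,S))] ≤ 2·C_e·E[|g(X) − g'(X)|²]. -/
open MeasureTheory ProbabilityTheory Real Filter Topology

noncomputable section

private lemma integrable_of_abs_le' {Ω : Type*} [MeasurableSpace Ω] {P : Measure Ω}
    [IsFiniteMeasure P] {f : Ω → ℝ} (hf : AEStronglyMeasurable f P) {C : ℝ}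
    (h : ∀ᵐ ω ∂P, |f ω| ≤ C) : Integrable f P :=
  memLp_one_iff_integrable.mp (MemLp.of_bound hf C (by simpa [Real.norm_eq_abs] using h))

private lemma swap_S_eY' {Ω α : Type*} [MeasurableSpace Ω] [MeasurableSpace α]
    (P : Measure Ω) [IsProbabilityMeasure P]
    (X : Ω → α) (Y S : Ω → ℝ) (e : α → ℝ)
    (hX : Measurable X) (hY : Measurable Y) (hS : Measurable S) (hem : Measurable e)
    (hS0 : ∀ᵐ ω ∂P, 0 ≤ S ω) (hS1 : ∀ᵐ ω ∂P, S ω ≤ 1)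
    (hY0 : ∀ᵐ ω ∂P, 0 ≤ Y ω) (hY1 : ∀ᵐ ω ∂P, Y ω ≤ 1)
    (he01 : ∀ x, 0 ≤ e x ∧ e x ≤ 1)
    (hid : ∀ A : Set α, MeasurableSet A →
      ∫ ω in X ⁻¹' A, S ω ∂P = ∫ ω in X ⁻¹' A, e (X ω) * Y ω ∂P)
    (φ : α → ℝ) (hφ : Measurable φ) (hφ0 : ∀ x, 0 ≤ φ x) :
    ∫ ω, S ω * φ (X ω) ∂P = ∫ ω, e (X ω) * Y ω * φ (X ω) ∂P := by
  set f1 : Ω → ENNReal := fun ω => ENNReal.ofReal (S ω) with hf1def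
  set f2 : Ω → ENNReal := fun ω => ENNReal.ofReal (e (X ω) * Y ω) with hf2def
  have hf1m : Measurable f1 := ENNReal.measurable_ofReal.comp hS
  have hf2m : Measurable f2 := ENNReal.measurable_ofReal.comp ((hem.comp hX).mul hY)
  have heY0 : ∀ᵐ ω ∂P, 0 ≤ e (X ω) * Y ω := hY0.mono fun ω h => mul_nonneg (he01 _).1 h
  have heY1 : ∀ᵐ ω ∂P, e (X ω) * Y ω ≤ 1 := by
    filter_upwards [hY0, hY1] with ω h0 h1
    exact mul_le_one₀ (he01 _).2 h0 h1
  have hb1 : ∫⁻ ω, f1 ω ∂P ≤ 1 := by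
    calc ∫⁻ ω, f1 ω ∂P ≤ ∫⁻ _, 1 ∂P := lintegral_mono_ae (hS1.mono fun ω h => by
          simpa [hf1def] using ENNReal.ofReal_le_one.mpr h)
      _ = 1 := by simp
  have hb2 : ∫⁻ ω, f2 ω ∂P ≤ 1 := by
    calc ∫⁻ ω, f2 ω ∂P ≤ ∫⁻ _, 1 ∂P := lintegral_mono_ae (heY1.mono fun ω h => by
          simpa [hf2def] using ENNReal.ofReal_le_one.mpr h)
      _ = 1 := by simp
  have hkey : ∀ A : Set α, MeasurableSet A →
      ∫⁻ ω in X ⁻¹' A, f1 ω ∂P = ∫⁻ ω in X ⁻¹' A, f2 ω ∂P := by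
    intro A hA
    have h1 : ∫ ω in X ⁻¹' A, S ω ∂P = (∫⁻ ω in X ⁻¹' A, f1 ω ∂P).toReal :=
      integral_eq_lintegral_of_nonneg_ae (ae_restrict_of_ae hS0)
        hS.aestronglyMeasurable.restrict
    have h2 : ∫ ω in X ⁻¹' A, e (X ω) * Y ω ∂P = (∫⁻ ω in X ⁻¹' A, f2 ω ∂P).toReal :=
      integral_eq_lintegral_of_nonneg_ae (ae_restrict_of_ae heY0)
        ((hem.comp hX).mul hY).aestronglyMeasurable.restrict
    have ht1 : ∫⁻ ω in X ⁻¹' A, f1 ω ∂P ≠ ⊤ :=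
      (lt_of_le_of_lt (le_trans (setLIntegral_le_lintegral _ _) hb1) ENNReal.one_lt_top).ne
    have ht2 : ∫⁻ ω in X ⁻¹' A, f2 ω ∂P ≠ ⊤ :=
      (lt_of_le_of_lt (le_trans (setLIntegral_le_lintegral _ _) hb2) ENNReal.one_lt_top).ne
    exact (ENNReal.toReal_eq_toReal_iff' ht1 ht2).mp (by rw [← h1, ← h2]; exact hid A hA)
  have hmeq : (P.withDensity f1).map X = (P.withDensity f2).map X := by
    ext A hA
    rw [Measure.map_apply hX hA, Measure.map_apply hX hA,
      withDensity_apply _ (hX hA), withDensity_apply _ (hX hA)]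
    exact hkey A hA
  have hφm : Measurable fun x => ENNReal.ofReal (φ x) := ENNReal.measurable_ofReal.comp hφ
  have hlin : ∫⁻ ω, f1 ω * ENNReal.ofReal (φ (X ω)) ∂P
      = ∫⁻ ω, f2 ω * ENNReal.ofReal (φ (X ω)) ∂P := by
    calc ∫⁻ ω, f1 ω * ENNReal.ofReal (φ (X ω)) ∂P
        = ∫⁻ ω, ENNReal.ofReal (φ (X ω)) ∂(P.withDensity f1) :=
          (lintegral_withDensity_eq_lintegral_mul P hf1m (hφm.comp hX)).symm
      _ = ∫⁻ x, ENNReal.ofReal (φ x) ∂((P.withDensity f1).map X) := (lintegral_map hφm hX).symm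
      _ = ∫⁻ x, ENNReal.ofReal (φ x) ∂((P.withDensity f2).map X) := by rw [hmeq]
      _ = ∫⁻ ω, ENNReal.ofReal (φ (X ω)) ∂(P.withDensity f2) := lintegral_map hφm hX
      _ = ∫⁻ ω, f2 ω * ENNReal.ofReal (φ (X ω)) ∂P :=
          lintegral_withDensity_eq_lintegral_mul P hf2m (hφm.comp hX)
  have e1 : ∫ ω, S ω * φ (X ω) ∂P = (∫⁻ ω, f1 ω * ENNReal.ofReal (φ (X ω)) ∂P).toReal := by
    rw [integral_eq_lintegral_of_nonneg_ae (hS0.mono fun ω h => mul_nonneg h (hφ0 _))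
      ((hS.mul (hφ.comp hX)).aestronglyMeasurable)]
    congr 1
    refine lintegral_congr_ae (hS0.mono fun ω h => ?_)
    show ENNReal.ofReal (S ω * φ (X ω)) = ENNReal.ofReal (S ω) * ENNReal.ofReal (φ (X ω))
    exact ENNReal.ofReal_mul h
  have e2 : ∫ ω, e (X ω) * Y ω * φ (X ω) ∂P
      = (∫⁻ ω, f2 ω * ENNReal.ofReal (φ (X ω)) ∂P).toReal := by
    rw [integral_eq_lintegral_of_nonneg_ae (heY0.mono fun ω h => mul_nonneg h (hφ0 _))
      ((((hem.comp hX).mul hY).mul (hφ.comp hX)).aestronglyMeasurable)]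
    congr 1
    refine lintegral_congr_ae (heY0.mono fun ω h => ?_)
    show ENNReal.ofReal (e (X ω) * Y ω * φ (X ω))
      = ENNReal.ofReal (e (X ω) * Y ω) * ENNReal.ofReal (φ (X ω))
    exact ENNReal.ofReal_mul h
  rw [e1, e2, hlin]

/-- **Proposition 1.** If the propensity satisfies `e(x) ≥ e_m > 0` and
`C_e = 2/e_m − 1`, then for any pair of classifiers `(g, g')`,
`Var[r_SAR(g',(X,S)) − r_SAR(g,(X,S))] ≤ 2·C_e·E[|g(X) − g'(X)|²]`. -/
theorem variance_increment_rSAR_le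
    (dim : ℕ) (Ω : Type*) [MeasurableSpace Ω] (P : Measure Ω) [IsProbabilityMeasure P]
    (X : Ω → (Fin dim → ℝ)) (Y S : Ω → ℝ) (η e : (Fin dim → ℝ) → ℝ) (e_m : ℝ)
    (g g' : (Fin dim → ℝ) → ℝ)
    (hX : Measurable X) (hY : Measurable Y) (hS : Measurable S)
    (hYb : ∀ᵐ ω ∂P, Y ω = 0 ∨ Y ω = 1) (hSb : ∀ᵐ ω ∂P, S ω = 0 ∨ S ω = 1)
    (hreg : IsRegression P X Y η) (hprop : IsPropensity P X Y S e)
    (hem : 0 < e_m) (he : ∀ x, e_m ≤ e x)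
    (hg : IsClassifier g) (hg' : IsClassifier g') :
    variance (fun ω => rSAR e g' (X ω, S ω) - rSAR e g (X ω, S ω)) P ≤
      2 * (2 / e_m - 1) * ∫ ω, |g (X ω) - g' (X ω)| ^ 2 ∂P := by
  obtain ⟨hgm, hg01⟩ := hg
  obtain ⟨hg'm, hg'01⟩ := hg'
  obtain ⟨hem', he01, hSY, hid⟩ := hprop
  obtain ⟨hηm, hη01, hregid⟩ := hreg
  have he0 : ∀ x, 0 < e x := fun x => lt_of_lt_of_le hem (he x)
  have hem1 : e_m ≤ 1 := le_trans (he (fun _ => 0)) (he01 _).2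
  have hS0 : ∀ᵐ ω ∂P, 0 ≤ S ω := hSb.mono (by rintro ω (h|h) <;> simp [h])
  have hS1 : ∀ᵐ ω ∂P, S ω ≤ 1 := hSb.mono (by rintro ω (h|h) <;> simp [h])
  have hY0 : ∀ᵐ ω ∂P, 0 ≤ Y ω := hYb.mono (by rintro ω (h|h) <;> simp [h])
  have hY1 : ∀ᵐ ω ∂P, Y ω ≤ 1 := hYb.mono (by rintro ω (h|h) <;> simp [h])
  set Δ : (Fin dim → ℝ) → ℝ := fun x => g x - g' x with hΔdef
  have hΔm : Measurable Δ := hgm.sub hg'm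
  have hΔ1 : ∀ x, |Δ x| ≤ 1 := by
    intro x
    rcases hg01 x with h | h <;> rcases hg'01 x with h' | h' <;> simp [hΔdef, h, h']
  have hΔsq : ∀ x, Δ x ^ 2 ≤ 1 := by
    intro x
    have := hΔ1 x
    nlinarith [abs_nonneg (Δ x), sq_abs (Δ x)]
  set D : Ω → ℝ := fun ω => ((if S ω = 1 then (2 : ℝ) else 0) / e (X ω) - 1) * Δ (X ω)
    with hDdef
  have hfun : (fun ω => rSAR e g' (X ω, S ω) - rSAR e g (X ω, S ω)) = D := by
    funext ω
    simp only [rSAR, hDdef, hΔdef]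
    rcases hg01 (X ω) with h | h <;> rcases hg'01 (X ω) with h' | h' <;>
      by_cases hs : S ω = 1 <;> simp [h, h', hs] <;> ring
  rw [hfun]
  have hsetS : MeasurableSet {ω | S ω = 1} := hS (measurableSet_singleton 1)
  have hDm : Measurable D := by
    apply Measurable.mul ?_ (hΔm.comp hX)
    exact ((Measurable.ite hsetS measurable_const measurable_const).div
      (hem'.comp hX)).sub measurable_const
  have h1 : variance D P ≤ ∫ ω, D ω ^ 2 ∂P :=
    variance_le_expectation_sq hDm.aestronglyMeasurable
  set φ : (Fin dim → ℝ) → ℝ := fun x => (4 / e x ^ 2 - 4 / e x) * Δ x ^ 2 with hφdef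
  have hφm : Measurable φ :=
    ((measurable_const.div (hem'.pow_const 2)).sub (measurable_const.div hem')).mul
      (hΔm.pow_const 2)
  have hA0 : ∀ x, 0 ≤ 4 / e x ^ 2 - 4 / e x := by
    intro x
    have hx := he0 x
    have h1 : (4 / e x ^ 2 - 4 / e x) = 4 * (1 - e x) / e x ^ 2 := by
      field_simp
    rw [h1]
    exact div_nonneg (by nlinarith [(he01 x).2]) (sq_nonneg _)
  have hφ0 : ∀ x, 0 ≤ φ x := fun x => mul_nonneg (hA0 x) (sq_nonneg _)
  have hφb : ∀ x, φ x ≤ 4 / e_m ^ 2 := by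
    intro x
    have hx := he0 x
    have h4 : 4 / e x ^ 2 ≤ 4 / e_m ^ 2 := by
      rw [div_le_div_iff₀ (by positivity) (by positivity)]
      nlinarith [pow_le_pow_left₀ hem.le (he x) 2]
    have h5 : 0 ≤ 4 / e x := by positivity
    calc φ x ≤ (4 / e x ^ 2 - 4 / e x) * 1 :=
          mul_le_mul_of_nonneg_left (hΔsq x) (hA0 x)
      _ = 4 / e x ^ 2 - 4 / e x := mul_one _
      _ ≤ 4 / e_m ^ 2 := by linarith
  have hpt : ∀ᵐ ω ∂P, D ω ^ 2 = S ω * φ (X ω) + Δ (X ω) ^ 2 := by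
    filter_upwards [hSb] with ω hs
    rcases hs with h0 | h1
    · simp only [hDdef, hφdef, h0]
      norm_num
    · have hne := (he0 (X ω)).ne'
      simp only [hDdef, hφdef, h1, eq_self_iff_true, if_true]
      field_simp
      ring
  have intΔ2 : Integrable (fun ω => Δ (X ω) ^ 2) P := by
    apply integrable_of_abs_le' ((hΔm.comp hX).pow_const 2).aestronglyMeasurable
      (C := 1) (Filter.Eventually.of_forall fun ω => ?_)
    show |Δ (X ω) ^ 2| ≤ 1
    rw [abs_pow, sq_abs]
    exact hΔsq _
  have intSφ : Integrable (fun ω => S ω * φ (X ω)) P := by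
    apply integrable_of_abs_le' (hS.mul (hφm.comp hX)).aestronglyMeasurable
      (C := 4 / e_m ^ 2)
    filter_upwards [hS0, hS1] with ω h0 h1'
    show |S ω * φ (X ω)| ≤ 4 / e_m ^ 2
    rw [abs_mul, abs_of_nonneg h0, abs_of_nonneg (hφ0 _)]
    calc S ω * φ (X ω) ≤ 1 * (4 / e_m ^ 2) :=
          mul_le_mul h1' (hφb _) (hφ0 _) zero_le_one
      _ = 4 / e_m ^ 2 := one_mul _
  have inteYφ : Integrable (fun ω => e (X ω) * Y ω * φ (X ω)) P := by
    apply integrable_of_abs_le' (((hem'.comp hX).mul hY).mul (hφm.comp hX)).aestronglyMeasurable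
      (C := 4 / e_m ^ 2)
    filter_upwards [hY0, hY1] with ω h0 h1'
    have heY01 : 0 ≤ e (X ω) * Y ω ∧ e (X ω) * Y ω ≤ 1 :=
      ⟨mul_nonneg (he01 _).1 h0,
        le_trans (mul_le_one₀ (he01 _).2 h0 h1') le_rfl⟩
    show |e (X ω) * Y ω * φ (X ω)| ≤ 4 / e_m ^ 2
    rw [abs_mul, abs_of_nonneg heY01.1, abs_of_nonneg (hφ0 _)]
    calc e (X ω) * Y ω * φ (X ω) ≤ 1 * (4 / e_m ^ 2) :=
          mul_le_mul heY01.2 (hφb _) (hφ0 _) zero_le_one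
      _ = 4 / e_m ^ 2 := one_mul _
  have intD2 : Integrable (fun ω => D ω ^ 2) P :=
    (intSφ.add intΔ2).congr (hpt.mono fun ω h => h.symm)
  have hint : ∫ ω, D ω ^ 2 ∂P = ∫ ω, S ω * φ (X ω) ∂P + ∫ ω, Δ (X ω) ^ 2 ∂P := by
    rw [← integral_add intSφ intΔ2]
    exact integral_congr_ae hpt
  have heY1' : ∀ᵐ ω ∂P, e (X ω) * Y ω ≤ 1 := by
    filter_upwards [hY0, hY1] with ω h0 h1'
    exact mul_le_one₀ (he01 _).2 h0 h1'
  have hswap : ∫ ω, S ω * φ (X ω) ∂P = ∫ ω, e (X ω) * Y ω * φ (X ω) ∂P :=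
    swap_S_eY' P X Y S e hX hY hS hem' hS0 hS1 hY0 hY1 he01 hid φ hφm hφ0
  have hbound2 : ∫ ω, e (X ω) * Y ω * φ (X ω) ∂P ≤ (4 / e_m - 4) * ∫ ω, Δ (X ω) ^ 2 ∂P := by
    rw [← integral_const_mul]
    apply integral_mono_ae inteYφ (intΔ2.const_mul _)
    filter_upwards [hY0, hY1] with ω h0 h1'
    have hx := he0 (X ω)
    have heq : e (X ω) * φ (X ω) = (4 / e (X ω) - 4) * Δ (X ω) ^ 2 := by
      simp only [hφdef]
      field_simp
    have h4a : 4 / e (X ω) ≤ 4 / e_m := by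
      rw [div_le_div_iff₀ hx hem]
      nlinarith [he (X ω)]
    have h4b : (4 : ℝ) ≤ 4 / e (X ω) := by
      rw [le_div_iff₀ hx]
      nlinarith [(he01 (X ω)).2]
    calc e (X ω) * Y ω * φ (X ω) = Y ω * ((4 / e (X ω) - 4) * Δ (X ω) ^ 2) := by
          rw [← heq]; ring
      _ ≤ 1 * ((4 / e_m - 4) * Δ (X ω) ^ 2) := by
          apply mul_le_mul h1' ?_ ?_ zero_le_one
          · exact mul_le_mul_of_nonneg_right (by linarith) (sq_nonneg _)
          · exact mul_nonneg (by linarith) (sq_nonneg _)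
      _ = (4 / e_m - 4) * Δ (X ω) ^ 2 := one_mul _
  have hΔnn : 0 ≤ ∫ ω, Δ (X ω) ^ 2 ∂P := integral_nonneg fun ω => sq_nonneg _
  have hRHS : ∫ ω, |g (X ω) - g' (X ω)| ^ 2 ∂P = ∫ ω, Δ (X ω) ^ 2 ∂P := by
    congr 1
    funext ω
    rw [sq_abs]
  have hemne : e_m ≠ 0 := ne_of_gt hem
  calc variance D P ≤ ∫ ω, D ω ^ 2 ∂P := h1
    _ = ∫ ω, S ω * φ (X ω) ∂P + ∫ ω, Δ (X ω) ^ 2 ∂P := hint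
    _ = ∫ ω, e (X ω) * Y ω * φ (X ω) ∂P + ∫ ω, Δ (X ω) ^ 2 ∂P := by rw [hswap]
    _ ≤ (4 / e_m - 4) * (∫ ω, Δ (X ω) ^ 2 ∂P) + ∫ ω, Δ (X ω) ^ 2 ∂P := by linarith
    _ ≤ 2 * (2 / e_m - 1) * ∫ ω, Δ (X ω) ^ 2 ∂P := by
        have hring : 2 * (2 / e_m - 1) * (∫ ω, Δ (X ω) ^ 2 ∂P)
            - ((4 / e_m - 4) * (∫ ω, Δ (X ω) ^ 2 ∂P) + ∫ ω, Δ (X ω) ^ 2 ∂P)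
            = ∫ ω, Δ (X ω) ^ 2 ∂P := by ring
        linarith
    _ = 2 * (2 / e_m - 1) * ∫ ω, |g (X ω) - g' (X ω)| ^ 2 ∂P := by rw [hRHS]
end
end

section
/- Let K ≥ 1, V ≥ 1, n ≥ 1, h > 0, 0 < e_m ≤ 1, and C_e = 2/e_m − 1. Suppose ε* > 0 satisfies the fixed point equation √n·ε*² = K·ε*·√(2·C_e/h)·√( V·(1 + log(max( √(C_e·h)/(√2·ε*), 1 ))) ). Then ε* ≥ √(2·C_e·V/(n·h)) and ε*² ≤ 4·K²·(V/(n·h·e_m))·(1 + log(max(n·h²/V, 1))). -/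
open Real

set_option maxHeartbeats 1000000 in
/-- **Solution of the fixed point equation (Appendix A.3, first case).**
If `ε* > 0` solves `√n·ε*² = K·ε*·√(2·C_e/h)·√(V·(1 + log(max(√(C_e·h)/(√2·ε*), 1))))`
with `K ≥ 1`, `V, n ≥ 1`, `h > 0`, `0 < e_m ≤ 1` and `C_e = 2/e_m − 1`, then
`ε* ≥ √(2·C_e·V/(n·h))` and `ε*² ≤ 4·K²·(V/(n·h·e_m))·(1 + log(max(n·h²/V, 1)))`. -/
theorem fixed_point_bounds
    (K h e_m ε : ℝ) (V n : ℕ)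
    (hK : 1 ≤ K) (hV : 1 ≤ V) (hn : 1 ≤ n) (hh : 0 < h)
    (hem0 : 0 < e_m) (hem1 : e_m ≤ 1) (hε : 0 < ε)
    (heq : Real.sqrt (n : ℝ) * ε ^ 2 =
      K * ε * Real.sqrt (2 * (2 / e_m - 1) / h) *
        Real.sqrt ((V : ℝ) *
          (1 + Real.log (max (Real.sqrt ((2 / e_m - 1) * h) / (Real.sqrt 2 * ε)) 1)))) :
    Real.sqrt (2 * (2 / e_m - 1) * (V : ℝ) / ((n : ℝ) * h)) ≤ ε ∧
      ε ^ 2 ≤ 4 * K ^ 2 * ((V : ℝ) / ((n : ℝ) * h * e_m)) *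
        (1 + Real.log (max ((n : ℝ) * h ^ 2 / (V : ℝ)) 1)) := by
  have hV1 : (1:ℝ) ≤ (V:ℝ) := by exact_mod_cast hV
  have hn1 : (1:ℝ) ≤ (n:ℝ) := by exact_mod_cast hn
  have hn0 : (0:ℝ) < (n:ℝ) := by linarith
  have hV0 : (0:ℝ) < (V:ℝ) := by linarith
  set C : ℝ := 2 / e_m - 1 with hCdef
  have h2em : (2:ℝ) ≤ 2 / e_m := by rw [le_div_iff₀ hem0]; nlinarith
  have hC1 : 1 ≤ C := by simp only [hCdef]; linarith
  have hC0 : (0:ℝ) < C := by linarith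
  set M : ℝ := max (Real.sqrt (C * h) / (Real.sqrt 2 * ε)) 1 with hMdef
  have hM1 : (1:ℝ) ≤ M := le_max_right _ _
  set L : ℝ := 1 + Real.log M with hLdef
  have hL1 : (1:ℝ) ≤ L := by
    have := Real.log_nonneg hM1
    simp only [hLdef]; linarith
  have key : Real.sqrt (n:ℝ) * ε = K * Real.sqrt (2 * C / h) * Real.sqrt ((V:ℝ) * L) := by
    have h1 : (Real.sqrt (n:ℝ) * ε) * ε
        = (K * Real.sqrt (2 * C / h) * Real.sqrt ((V:ℝ) * L)) * ε := by
      linear_combination heq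
    exact mul_right_cancel₀ (ne_of_gt hε) h1
  have hVL0 : (0:ℝ) ≤ (V:ℝ) * L := by positivity
  have h2Ch : (0:ℝ) ≤ 2 * C / h := by positivity
  have sq : (n:ℝ) * ε ^ 2 = K ^ 2 * (2 * C / h) * ((V:ℝ) * L) := by
    have h2 : (Real.sqrt (n:ℝ) * ε) ^ 2
        = (K * Real.sqrt (2 * C / h) * Real.sqrt ((V:ℝ) * L)) ^ 2 := by rw [key]
    rw [mul_pow, mul_pow, mul_pow, Real.sq_sqrt hn0.le, Real.sq_sqrt h2Ch,
      Real.sq_sqrt hVL0] at h2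
    linarith [h2]
  have sq' : (n:ℝ) * ε ^ 2 * h = K ^ 2 * (2 * C) * ((V:ℝ) * L) := by
    rw [sq]; field_simp
  have hK2 : (1:ℝ) ≤ K ^ 2 := by nlinarith
  have hKL : (1:ℝ) ≤ K ^ 2 * L := by nlinarith [hK2, hL1]
  have hq : (0:ℝ) ≤ (K ^ 2 * L - 1) * (C * (V:ℝ)) :=
    mul_nonneg (sub_nonneg.2 hKL) (mul_pos hC0 hV0).le
  have hlow' : 2 * C * (V:ℝ) ≤ ε ^ 2 * ((n:ℝ) * h) := by linarith [sq', hq]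
  have hlow : 2 * C * (V:ℝ) / ((n:ℝ) * h) ≤ ε ^ 2 := by
    rw [div_le_iff₀ (by positivity)]; linarith
  have part1 : Real.sqrt (2 * C * (V:ℝ) / ((n:ℝ) * h)) ≤ ε := by
    have := Real.sqrt_le_sqrt hlow
    rwa [Real.sqrt_sq hε.le] at this
  refine ⟨part1, ?_⟩
  set N : ℝ := max ((n:ℝ) * h ^ 2 / (V:ℝ)) 1 with hNdef
  have hN1 : (1:ℝ) ≤ N := le_max_right _ _
  have hNge : (n:ℝ) * h ^ 2 / (V:ℝ) ≤ N := le_max_left _ _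
  have hNV : (n:ℝ) * h ^ 2 ≤ N * (V:ℝ) := by
    rw [div_le_iff₀ hV0] at hNge; linarith
  have hMN : M ≤ N := by
    apply max_le _ hN1
    have hsq : (Real.sqrt (C * h) / (Real.sqrt 2 * ε)) ^ 2 ≤ N ^ 2 := by
      rw [div_pow, mul_pow, Real.sq_sqrt (by positivity : (0:ℝ) ≤ C * h),
        Real.sq_sqrt (by norm_num : (0:ℝ) ≤ (2:ℝ))]
      rw [div_le_iff₀ (by positivity)]
      have hN2 : N ≤ N ^ 2 := by nlinarith [hN1]
      have hVnh : (0:ℝ) < (V:ℝ) * (n:ℝ) * h := by positivity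
      have Afact := mul_le_mul_of_nonneg_left hNV (mul_pos hC0 hV0).le
      have Bfact := mul_le_mul_of_nonneg_left hlow'
        (show (0:ℝ) ≤ N ^ 2 * (V:ℝ) by positivity)
      have Cfact := mul_le_mul_of_nonneg_left hN2
        (show (0:ℝ) ≤ C * (V:ℝ) * (V:ℝ) by positivity)
      have hpos2 : (0:ℝ) ≤ N ^ 2 * (V:ℝ) * (ε ^ 2 * ((n:ℝ) * h)) := by positivity
      have big : C * h * ((V:ℝ) * (n:ℝ) * h) ≤ N ^ 2 * (2 * ε ^ 2) * ((V:ℝ) * (n:ℝ) * h) := by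
        nlinarith [Afact, Bfact, Cfact, hpos2]
      exact le_of_mul_le_mul_right big hVnh
    exact le_of_pow_le_pow_left₀ two_ne_zero (by linarith) hsq
  have hlogMN : Real.log M ≤ Real.log N := Real.log_le_log (by linarith) hMN
  have hLN : L ≤ 1 + Real.log N := by simp only [hLdef]; linarith
  have hlogN0 : (0:ℝ) ≤ Real.log N := Real.log_nonneg hN1
  have h2Cem : 2 * C * e_m ≤ 4 := by
    have : 2 * C * e_m = 4 - 2 * e_m := by
      simp only [hCdef]; field_simp; ring
    linarith
  have e1 : ε ^ 2 * ((n:ℝ) * h * e_m) = K ^ 2 * (V:ℝ) * L * (2 * C * e_m) := by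
    linear_combination e_m * sq'
  have e2 : K ^ 2 * (V:ℝ) * L * (2 * C * e_m) ≤ K ^ 2 * (V:ℝ) * L * 4 :=
    mul_le_mul_of_nonneg_left h2Cem (by positivity)
  have e3 : K ^ 2 * (V:ℝ) * L * 4 ≤ 4 * K ^ 2 * (V:ℝ) * (1 + Real.log N) := by
    nlinarith [mul_le_mul_of_nonneg_left hLN (show (0:ℝ) ≤ 4 * K ^ 2 * (V:ℝ) by positivity)]
  have hpos : (0:ℝ) < (n:ℝ) * h * e_m := by positivity
  rw [show 4 * K ^ 2 * ((V:ℝ) / ((n:ℝ) * h * e_m)) * (1 + Real.log N)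
      = (4 * K ^ 2 * (V:ℝ) * (1 + Real.log N)) / ((n:ℝ) * h * e_m) by ring,
    le_div_iff₀ hpos]
  linarith
end

section
/- Assume the propensity satisfies e(x) > 0 for all x ∈ ℝ^d. Then for any pair of classifiers (g, g'), E[(r_SAR(g,(X,S)) − r_SAR(g',(X,S)))²] = E[ (g(X) − g'(X))² · (1 + 4·η(X)·(1 − e(X))/e(X)) ]. -/
open MeasureTheory ProbabilityTheory Real Filter Topology

noncomputable section

private lemma lint_transfer {Ω α : Type*} [MeasurableSpace Ω] [MeasurableSpace α]
    (P : Measure Ω) (X : Ω → α) (hX : Measurable X)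
    (h₁ h₂ : Ω → ENNReal) (hm1 : Measurable h₁) (hm2 : Measurable h₂)
    (heq : ∀ A : Set α, MeasurableSet A →
      ∫⁻ ω in X ⁻¹' A, h₁ ω ∂P = ∫⁻ ω in X ⁻¹' A, h₂ ω ∂P)
    {F : α → ENNReal} (hF : Measurable F) :
    ∫⁻ ω, F (X ω) * h₁ ω ∂P = ∫⁻ ω, F (X ω) * h₂ ω ∂P := by
  have hmap : (P.withDensity h₁).map X = (P.withDensity h₂).map X := by
    ext A hA
    rw [Measure.map_apply hX hA, Measure.map_apply hX hA,
      withDensity_apply _ (hX hA), withDensity_apply _ (hX hA)]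
    exact heq A hA
  have k1 : ∫⁻ ω, F (X ω) * h₁ ω ∂P = ∫⁻ a, F a ∂((P.withDensity h₁).map X) := by
    rw [lintegral_map hF hX, lintegral_withDensity_eq_lintegral_mul P hm1 (show Measurable fun ω => F (X ω) from hF.comp hX)]
    simp only [Pi.mul_apply]; exact lintegral_congr fun ω => mul_comm _ _
  have k2 : ∫⁻ ω, F (X ω) * h₂ ω ∂P = ∫⁻ a, F a ∂((P.withDensity h₂).map X) := by
    rw [lintegral_map hF hX, lintegral_withDensity_eq_lintegral_mul P hm2 (show Measurable fun ω => F (X ω) from hF.comp hX)]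
    simp only [Pi.mul_apply]; exact lintegral_congr fun ω => mul_comm _ _
  rw [k1, k2, hmap]

/-- **Second moment identity for increments of the SAR loss (Equation 22a).**
If the propensity satisfies `e(x) > 0`, then for any pair of classifiers `(g, g')`,
`E[(r_SAR(g,(X,S)) − r_SAR(g',(X,S)))²] = E[(g(X) − g'(X))²·(1 + 4·η(X)·(1 − e(X))/e(X))]`. -/
theorem second_moment_increment_rSAR
    (dim : ℕ) (Ω : Type*) [MeasurableSpace Ω] (P : Measure Ω) [IsProbabilityMeasure P]
    (X : Ω → (Fin dim → ℝ)) (Y S : Ω → ℝ) (η e : (Fin dim → ℝ) → ℝ)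
    (g g' : (Fin dim → ℝ) → ℝ)
    (hX : Measurable X) (hY : Measurable Y) (hS : Measurable S)
    (hYb : ∀ᵐ ω ∂P, Y ω = 0 ∨ Y ω = 1) (hSb : ∀ᵐ ω ∂P, S ω = 0 ∨ S ω = 1)
    (hreg : IsRegression P X Y η) (hprop : IsPropensity P X Y S e)
    (he : ∀ x, 0 < e x)
    (hg : IsClassifier g) (hg' : IsClassifier g') :
    ∫ ω, (rSAR e g (X ω, S ω) - rSAR e g' (X ω, S ω)) ^ 2 ∂P =
      ∫ ω, (g (X ω) - g' (X ω)) ^ 2 *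
        (1 + 4 * η (X ω) * (1 - e (X ω)) / e (X ω)) ∂P := by
  obtain ⟨hη, hη01, hregI⟩ := hreg
  obtain ⟨hem, he01, _hSY, hpropI⟩ := hprop
  obtain ⟨hgm, hg01⟩ := hg
  obtain ⟨hg'm, hg'01⟩ := hg'
  have hene : ∀ x, e x ≠ 0 := fun x => (he x).ne'
  have hY0 : ∀ᵐ ω ∂P, 0 ≤ Y ω := by
    filter_upwards [hYb] with ω h; rcases h with h | h <;> simp [h]
  have hS0 : ∀ᵐ ω ∂P, 0 ≤ S ω := by
    filter_upwards [hSb] with ω h; rcases h with h | h <;> simp [h]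
  have hc0 : ∀ x, 0 ≤ 4 * (1 - e x) / (e x) ^ 2 := fun x =>
    div_nonneg (by linarith [(he01 x).2]) (sq_nonneg _)
  -- integrability of the bounded functions
  have hYint : Integrable Y P := by
    refine (integrable_const (1 : ℝ)).mono' hY.aestronglyMeasurable ?_
    filter_upwards [hYb] with ω h; rcases h with h | h <;> simp [h]
  have hSint : Integrable S P := by
    refine (integrable_const (1 : ℝ)).mono' hS.aestronglyMeasurable ?_
    filter_upwards [hSb] with ω h; rcases h with h | h <;> simp [h]
  have heYm : Measurable fun ω => e (X ω) * Y ω := (hem.comp hX).mul hY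
  have heYint : Integrable (fun ω => e (X ω) * Y ω) P := by
    refine (integrable_const (1 : ℝ)).mono' heYm.aestronglyMeasurable ?_
    filter_upwards [hYb] with ω h
    rcases h with h | h <;> simp [h, Real.norm_eq_abs, abs_le]
    exact ⟨by linarith [(he01 (X ω)).1], (he01 (X ω)).2⟩
  have hηXint : Integrable (fun ω => η (X ω)) P := by
    refine (integrable_const (1 : ℝ)).mono' (hη.comp hX).aestronglyMeasurable ?_
    refine Eventually.of_forall fun ω => ?_
    rw [Real.norm_eq_abs, abs_le]
    exact ⟨by linarith [(hη01 (X ω)).1], (hη01 (X ω)).2⟩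
  -- lintegral versions of the two conditional-expectation hypotheses
  have heqS : ∀ A : Set (Fin dim → ℝ), MeasurableSet A →
      ∫⁻ ω in X ⁻¹' A, ENNReal.ofReal (S ω) ∂P
        = ∫⁻ ω in X ⁻¹' A, ENNReal.ofReal (e (X ω) * Y ω) ∂P := by
    intro A hA
    rw [← ofReal_integral_eq_lintegral_ofReal (hSint.restrict) (ae_restrict_of_ae hS0),
      ← ofReal_integral_eq_lintegral_ofReal (heYint.restrict)
        (ae_restrict_of_ae (hY0.mono fun ω h => mul_nonneg (he01 _).1 h)),
      hpropI A hA]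
  have heqY : ∀ A : Set (Fin dim → ℝ), MeasurableSet A →
      ∫⁻ ω in X ⁻¹' A, ENNReal.ofReal (Y ω) ∂P
        = ∫⁻ ω in X ⁻¹' A, ENNReal.ofReal (η (X ω)) ∂P := by
    intro A hA
    rw [← ofReal_integral_eq_lintegral_ofReal (hYint.restrict) (ae_restrict_of_ae hY0),
      ← ofReal_integral_eq_lintegral_ofReal (hηXint.restrict)
        (ae_restrict_of_ae (Eventually.of_forall fun ω => (hη01 (X ω)).1)),
      hregI A hA]
  -- measurable ENNReal-valued building blocks
  have hDm : Measurable fun x => ENNReal.ofReal ((g x - g' x) ^ 2) :=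
    ENNReal.measurable_ofReal.comp ((hgm.sub hg'm).pow_const 2)
  have hCm : Measurable fun x => ENNReal.ofReal (4 * (1 - e x) / (e x) ^ 2) :=
    ENNReal.measurable_ofReal.comp
      ((measurable_const.mul (measurable_const.sub hem)).div (hem.pow_const 2))
  -- Step 1: a.e. pointwise identity for the LHS integrand
  have haeL : ∀ᵐ ω ∂P, (rSAR e g (X ω, S ω) - rSAR e g' (X ω, S ω)) ^ 2
      = (g (X ω) - g' (X ω)) ^ 2 * (1 + S ω * (4 * (1 - e (X ω)) / (e (X ω)) ^ 2)) := by
    filter_upwards [hSb] with ω hSω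
    have hE := hene (X ω)
    rcases hg01 (X ω) with h1 | h1 <;> rcases hg'01 (X ω) with h2 | h2 <;>
      rcases hSω with h3 | h3 <;>
      · simp only [rSAR, h1, h2, h3]
        norm_num
        try (field_simp; ring)
  have hnicem : Measurable fun ω =>
      (g (X ω) - g' (X ω)) ^ 2 * (1 + S ω * (4 * (1 - e (X ω)) / (e (X ω)) ^ 2)) :=
    (((hgm.comp hX).sub (hg'm.comp hX)).pow_const 2).mul
      (measurable_const.add (hS.mul
        ((measurable_const.mul (measurable_const.sub (hem.comp hX))).div
          ((hem.comp hX).pow_const 2))))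
  have hrhsm : Measurable fun ω =>
      (g (X ω) - g' (X ω)) ^ 2 * (1 + 4 * η (X ω) * (1 - e (X ω)) / e (X ω)) :=
    (((hgm.comp hX).sub (hg'm.comp hX)).pow_const 2).mul
      (measurable_const.add
        (((measurable_const.mul (hη.comp hX)).mul
          (measurable_const.sub (hem.comp hX))).div (hem.comp hX)))
  -- Key ENNReal identity
  have key : ∫⁻ ω, ENNReal.ofReal ((g (X ω) - g' (X ω)) ^ 2
        * (1 + S ω * (4 * (1 - e (X ω)) / (e (X ω)) ^ 2))) ∂P
      = ∫⁻ ω, ENNReal.ofReal ((g (X ω) - g' (X ω)) ^ 2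
        * (1 + 4 * η (X ω) * (1 - e (X ω)) / e (X ω))) ∂P := by
    have hsplitL : ∫⁻ ω, ENNReal.ofReal ((g (X ω) - g' (X ω)) ^ 2
          * (1 + S ω * (4 * (1 - e (X ω)) / (e (X ω)) ^ 2))) ∂P
        = ∫⁻ ω, (ENNReal.ofReal ((g (X ω) - g' (X ω)) ^ 2)
            + (ENNReal.ofReal ((g (X ω) - g' (X ω)) ^ 2)
              * ENNReal.ofReal (4 * (1 - e (X ω)) / (e (X ω)) ^ 2))
              * ENNReal.ofReal (S ω)) ∂P := by
      refine lintegral_congr_ae ?_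
      filter_upwards [hS0] with ω hs0
      rw [ENNReal.ofReal_mul (sq_nonneg _),
        ENNReal.ofReal_add zero_le_one (mul_nonneg hs0 (hc0 (X ω))),
        ENNReal.ofReal_mul hs0, ENNReal.ofReal_one]
      ring
    have hsplitR : ∫⁻ ω, ENNReal.ofReal ((g (X ω) - g' (X ω)) ^ 2
          * (1 + 4 * η (X ω) * (1 - e (X ω)) / e (X ω))) ∂P
        = ∫⁻ ω, (ENNReal.ofReal ((g (X ω) - g' (X ω)) ^ 2)
            + (ENNReal.ofReal ((g (X ω) - g' (X ω)) ^ 2)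
              * ENNReal.ofReal (4 * (1 - e (X ω)) / (e (X ω)) ^ 2)
              * ENNReal.ofReal (e (X ω))) * ENNReal.ofReal (η (X ω))) ∂P := by
      refine lintegral_congr fun ω => ?_
      have hr : 1 + 4 * η (X ω) * (1 - e (X ω)) / e (X ω)
          = 1 + 4 * (1 - e (X ω)) / (e (X ω)) ^ 2 * e (X ω) * η (X ω) := by
        have hE := hene (X ω)
        field_simp
      rw [hr, ENNReal.ofReal_mul (sq_nonneg _),
        ENNReal.ofReal_add zero_le_one
          (mul_nonneg (mul_nonneg (hc0 (X ω)) (he01 (X ω)).1) (hη01 (X ω)).1),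
        ENNReal.ofReal_mul (mul_nonneg (hc0 (X ω)) (he01 (X ω)).1),
        ENNReal.ofReal_mul (hc0 (X ω)), ENNReal.ofReal_one]
      ring
    rw [hsplitL, hsplitR,
      lintegral_add_left (show Measurable fun ω => ENNReal.ofReal ((g (X ω) - g' (X ω)) ^ 2)
        from hDm.comp hX),
      lintegral_add_left (show Measurable fun ω => ENNReal.ofReal ((g (X ω) - g' (X ω)) ^ 2)
        from hDm.comp hX)]
    congr 1
    have T1 : ∫⁻ ω, (ENNReal.ofReal ((g (X ω) - g' (X ω)) ^ 2)
          * ENNReal.ofReal (4 * (1 - e (X ω)) / (e (X ω)) ^ 2))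
          * ENNReal.ofReal (S ω) ∂P
        = ∫⁻ ω, (ENNReal.ofReal ((g (X ω) - g' (X ω)) ^ 2)
          * ENNReal.ofReal (4 * (1 - e (X ω)) / (e (X ω)) ^ 2))
          * ENNReal.ofReal (e (X ω) * Y ω) ∂P :=
      lint_transfer P X hX _ _ (ENNReal.measurable_ofReal.comp hS)
        (ENNReal.measurable_ofReal.comp heYm) heqS (hDm.mul hCm)
    have T2 : ∫⁻ ω, (ENNReal.ofReal ((g (X ω) - g' (X ω)) ^ 2)
          * ENNReal.ofReal (4 * (1 - e (X ω)) / (e (X ω)) ^ 2)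
          * ENNReal.ofReal (e (X ω))) * ENNReal.ofReal (Y ω) ∂P
        = ∫⁻ ω, (ENNReal.ofReal ((g (X ω) - g' (X ω)) ^ 2)
          * ENNReal.ofReal (4 * (1 - e (X ω)) / (e (X ω)) ^ 2)
          * ENNReal.ofReal (e (X ω))) * ENNReal.ofReal (η (X ω)) ∂P :=
      lint_transfer P X hX _ _ (ENNReal.measurable_ofReal.comp hY)
        (ENNReal.measurable_ofReal.comp (hη.comp hX)) heqY
        ((hDm.mul hCm).mul (ENNReal.measurable_ofReal.comp hem))
    rw [T1, ← T2]
    refine lintegral_congr fun ω => ?_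
    rw [ENNReal.ofReal_mul (he01 (X ω)).1, ← mul_assoc]
  -- assemble
  rw [integral_congr_ae haeL,
    integral_eq_lintegral_of_nonneg_ae ?posL hnicem.aestronglyMeasurable,
    integral_eq_lintegral_of_nonneg_ae ?posR hrhsm.aestronglyMeasurable, key]
  case posL =>
    filter_upwards [hS0] with ω hs0
    exact mul_nonneg (sq_nonneg _)
      (by nlinarith [hc0 (X ω), mul_nonneg hs0 (hc0 (X ω))])
  case posR =>
    refine Eventually.of_forall fun ω => mul_nonneg (sq_nonneg _) ?_
    have : 0 ≤ 4 * η (X ω) * (1 - e (X ω)) / e (X ω) :=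
      div_nonneg (mul_nonneg (by linarith [(hη01 (X ω)).1]) (by linarith [(he01 (X ω)).2]))
        (he (X ω)).le
    linarith
end
end
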